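/- arXiv:1205.0513 — 7 statements merged into one kernel-verified Lean document; each statement's English description precedes it below -/
import Mathlib

section
/- Let Γ be a finite dismantlable graph with vertex set V, and let σ ∈ V be a vertex that is dominated in Γ. Then the subgraph of Γ induced on V ∖ {σ} is dismantlable. -/
open SimpleGraph

variable {V : Type*}

/-- The closed neighbourhood of a vertex: the vertex together with all its neighbours. -/
def closedNbhd (G : SimpleGraph V) (ρ : V) : Set V := insert ρ {w | G.Adj ρ w}

/-- `ρ` is dominated by `π` within the subgraph of `G` induced on `S`:
`π ∈ S`, `π ≠ ρ`, and `N(ρ) ∩ S ⊆ N(π)`. -/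
def DominatedIn (G : SimpleGraph V) (S : Set V) (ρ π : V) : Prop :=
  π ∈ S ∧ π ≠ ρ ∧ ∀ w ∈ S, w ∈ closedNbhd G ρ → w ∈ closedNbhd G π

/-- The subgraph of `G` induced on `S` is dismantlable: the vertices of `S` can be
arranged in a (finite) list such that each vertex except the last is dominated in the
subgraph induced on it and the later vertices. -/
def DismantlableOn (G : SimpleGraph V) (S : Set V) : Prop :=
  ∃ l : List V, l.Nodup ∧ (∀ v, v ∈ l ↔ v ∈ S) ∧
    ∀ (i : ℕ) (h : i < l.length), i < l.length - 1 →
      ∃ π, DominatedIn G {w | w ∈ l.drop i} (l[i]'h) π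

/-- A graph is dismantlable if the subgraph induced on all of its vertices is. -/
def Dismantlable (G : SimpleGraph V) : Prop := DismantlableOn G Set.univ

/-- The set `Π*(ρ)` of all vertices appearing in pairs of `Π ρ`. -/
def PiStar (Pr : V → Finset (Sym2 V)) (ρ : V) : Set V := {v | ∃ p ∈ Pr ρ, v ∈ p}

/-- `Pr` is a `σ`-projection: it assigns to each vertex `ρ ≠ σ` a nonempty finite set of
unordered pairs of vertices such that (i) every finite set `R` containing a vertex other
than `σ` has an exposed vertex, and (ii) there is no cycle `ρ₀, …, ρ_{m-1}` with
`ρ_{i+1} ∈ Π*(ρ_i)` (indices mod `m`). -/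
structure IsSigmaProjection (G : SimpleGraph V) (σ : V) (Pr : V → Finset (Sym2 V)) : Prop where
  nonempty : ∀ ρ, ρ ≠ σ → (Pr ρ).Nonempty
  exposed : ∀ R : Finset V, (∃ ρ ∈ R, ρ ≠ σ) →
    ∃ ρ ∈ R, ρ ≠ σ ∧ ∃ p ∈ Pr ρ, ∀ π ∈ p,
      ∀ w ∈ R, w ∈ closedNbhd G ρ → w ∈ closedNbhd G π
  acyclic : ¬ ∃ m : ℕ, 0 < m ∧ ∃ f : ZMod m → V,
    ∀ i, f i ≠ σ ∧ f (i + 1) ∈ PiStar Pr (f i)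

/-- `R` is `Π`-convex: for every `ρ ∈ R` other than `σ`, each pair in `Π ρ` meets `R`. -/
def PiConvex (σ : V) (Pr : V → Finset (Sym2 V)) (R : Set V) : Prop :=
  ∀ ρ ∈ R, ρ ≠ σ → ∀ p ∈ Pr ρ, ∃ v ∈ p, v ∈ R

/-- The orbit `HR` of a set `R` under a group action. -/
def orbitSet (H : Type*) [Group H] [MulAction H V] (R : Set V) : Set V :=
  {x | ∃ h : H, ∃ ρ ∈ R, x = h • ρ}

/-- The geometric realization of the flag complex of `G` inside `ℝ^V`: the union over
all (nonempty) cliques of the convex hulls of the corresponding standard basis vectors. -/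
def flagRealization [DecidableEq V] (G : SimpleGraph V) : Set (V → ℝ) :=
  ⋃ (Δ : Set V) (_ : Δ.Nonempty) (_ : G.IsClique Δ),
    convexHull ℝ ((fun v => (Pi.single v 1 : V → ℝ)) '' Δ)

/-- A walk is a geodesic if its length equals the distance between its endpoints. -/
def IsGeodesic (G : SimpleGraph V) {u v : V} (p : G.Walk u v) : Prop :=
  p.length = G.dist u v

/-- `G` is `δ`-hyperbolic: for any geodesic triangle, each vertex on one side is within
distance `δ` of some vertex on the union of the other two sides. -/
def Hyperbolic (G : SimpleGraph V) (δ : ℕ) : Prop :=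
  ∀ (u v w : V) (p : G.Walk u v) (q : G.Walk v w) (r : G.Walk w u),
    IsGeodesic G p → IsGeodesic G q → IsGeodesic G r →
    ∀ t ∈ p.support, ∃ s, (s ∈ q.support ∨ s ∈ r.support) ∧ G.dist t s ≤ δ

/-- The Rips graph `Γ_D`: same vertices, two distinct vertices adjacent iff their
graph distance in `G` is at most `D`. -/
def ripsGraph (G : SimpleGraph V) (D : ℕ) : SimpleGraph V where
  Adj u v := u ≠ v ∧ G.dist u v ≤ D
  symm := by
    constructor
    intro u v h
    exact ⟨h.1.symm, by rw [SimpleGraph.dist_comm]; exact h.2⟩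
  loopless := by
    constructor
    intro v h
    exact h.1 rfl

/-- The ball of radius `r` around a set `C` of vertices. -/
def ballSet (G : SimpleGraph V) (C : Set V) (r : ℕ) : Set V :=
  {v | ∃ c ∈ C, G.dist v c ≤ r}

namespace DismantleAux

open scoped Classical

variable {G : SimpleGraph V}

lemma mem_closedNbhd {ρ w : V} :
    w ∈ closedNbhd G ρ ↔ w = ρ ∨ G.Adj ρ w := Set.mem_insert_iff

lemma dominatedIn_mono {S S' : Set V} (hsub : S' ⊆ S) {σ π : V}
    (hπ : π ∈ S') (h : DominatedIn G S σ π) : DominatedIn G S' σ π :=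
  ⟨hπ, h.2.1, fun w hw => h.2.2 w (hsub hw)⟩

lemma dominatedIn_congr {S T : Set V} (h : S = T) {σ π : V}
    (hd : DominatedIn G S σ π) : DominatedIn G T σ π := h ▸ hd

lemma tail_cond {v : V} {rest : List V}
    (h : ∀ (i : ℕ) (hh : i < (v::rest).length), i < (v::rest).length - 1 →
      ∃ π, DominatedIn G {w | w ∈ (v::rest).drop i} ((v::rest)[i]'hh) π) :
    ∀ (i : ℕ) (hh : i < rest.length), i < rest.length - 1 →
      ∃ π, DominatedIn G {w | w ∈ rest.drop i} (rest[i]'hh) π := by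
  intro i hh hi
  have h1 : i + 1 < (v::rest).length := by simp; omega
  have h2 : i + 1 < (v::rest).length - 1 := by simp; omega
  obtain ⟨π, hπ⟩ := h (i+1) h1 h2
  exact ⟨π, by simpa using hπ⟩

/-- twin equivalence: if `σ` and `v` dominate each other within `S`,
closed-neighbourhood membership is preserved by substituting `σ ↦ v`,
for vertices in `S \ {v}`. -/
lemma twin_clN {S : Set V} {σ v : V}
    (h1 : ∀ w ∈ S, w ∈ closedNbhd G σ → w ∈ closedNbhd G v)
    (h2 : ∀ w ∈ S, w ∈ closedNbhd G v → w ∈ closedNbhd G σ)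
    {x w : V} (hx : x ∈ S) (hxv : x ≠ v) (hw : w ∈ S) (hwv : w ≠ v) :
    (w ∈ closedNbhd G x ↔
      (if w = σ then v else w) ∈ closedNbhd G (if x = σ then v else x)) := by
  have htwin : ∀ u ∈ S, (u ∈ closedNbhd G σ ↔ u ∈ closedNbhd G v) :=
    fun u hu => ⟨h1 u hu, h2 u hu⟩
  by_cases hxσ : x = σ
  · by_cases hwσ : w = σ
    · subst hxσ; subst hwσ
      simp only [if_pos rfl]
      constructor <;> intro _ <;> exact Set.mem_insert _ _
    · subst hxσ
      simp only [if_pos rfl, if_neg hwσ]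
      exact htwin w hw
  · by_cases hwσ : w = σ
    · rw [if_pos hwσ, if_neg hxσ, hwσ]
      have hx' := htwin x hx
      rw [mem_closedNbhd, mem_closedNbhd] at hx'
      rw [or_iff_right hxσ, or_iff_right hxv] at hx'
      rw [mem_closedNbhd, mem_closedNbhd,
        or_iff_right (fun h => hxσ h.symm), or_iff_right (fun h => hxv h.symm),
        G.adj_comm x σ, G.adj_comm x v]
      exact hx'
    · simp only [if_neg hxσ, if_neg hwσ]

/-- The key induction: if a list dismantles `S` and `σ ∈ S` is dominated in `S`,
then `S \ {σ}` is dismantlable. -/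
lemma key (G : SimpleGraph V) (l : List V) :
    ∀ (S : Set V), l.Nodup → (∀ x, x ∈ l ↔ x ∈ S) →
    (∀ (i : ℕ) (h : i < l.length), i < l.length - 1 →
      ∃ π, DominatedIn G {w | w ∈ l.drop i} (l[i]'h) π) →
    ∀ σ π, σ ∈ S → DominatedIn G S σ π → DismantlableOn G (S \ {σ}) := by
  induction l with
  | nil =>
    intro S _ hmem _ σ π hσ _
    exact absurd ((hmem σ).mpr hσ) (by simp)
  | cons v rest IH =>
    intro S hnodup hmem hcond σ π hσ hdom
    have hvnotrest : v ∉ rest := (List.nodup_cons.mp hnodup).1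
    have hrestnodup : rest.Nodup := (List.nodup_cons.mp hnodup).2
    have hvS : v ∈ S := (hmem v).mp List.mem_cons_self
    have hSset : {w | w ∈ (v :: rest)} = S := Set.ext fun x => hmem x
    -- tail facts
    have htmem : ∀ x, x ∈ rest ↔ x ∈ S \ {v} := by
      intro x
      constructor
      · intro hx
        refine ⟨(hmem x).mp (List.mem_cons_of_mem v hx), ?_⟩
        intro hxv
        exact hvnotrest (hxv ▸ hx)
      · rintro ⟨hxS, hxv⟩
        rcases List.mem_cons.mp ((hmem x).mpr hxS) with h | h
        · exact absurd h hxv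
        · exact h
    have htcond := tail_cond (G := G) (v := v) (rest := rest) hcond
    rcases List.eq_nil_or_concat rest with hrest | _
    · -- rest = [], so S = {v}, contradiction with dominator
      subst hrest
      have hπS := hdom.1
      have : π = v := by
        rcases List.mem_cons.mp ((hmem π).mpr hπS) with h | h
        · exact h
        · simp at h
      have hσv : σ = v := by
        rcases List.mem_cons.mp ((hmem σ).mpr hσ) with h | h
        · exact h
        · simp at h
      exact absurd (this.trans hσv.symm) hdom.2.1
    · have hrestlen : 0 < rest.length := by
        rcases rest with _ | ⟨a, t⟩
        · simp_all
        · simp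
      -- v is dominated in S by some π₀
      obtain ⟨π₀, hπ₀⟩ := hcond 0 (by simp) (by simp; omega)
      rw [List.drop_zero] at hπ₀
      have hπ₀' : DominatedIn G S v π₀ := by
        rw [List.getElem_cons_zero] at hπ₀
        exact dominatedIn_congr hSset hπ₀
      by_cases hvσ : v = σ
      · -- head is σ: the tail dismantles S \ {σ}
        subst hvσ
        exact ⟨rest, hrestnodup, fun x => (htmem x), htcond⟩
      · -- v ≠ σ
        have hσrest : σ ∈ S \ {v} := ⟨hσ, fun h => hvσ h.symm⟩
        by_cases htwin : π = v ∧ π₀ = σ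
        · -- twin case: substitute σ ↦ v in the tail list
          obtain ⟨hπv, hπ₀σ⟩ := htwin
          have h1 : ∀ w ∈ S, w ∈ closedNbhd G σ → w ∈ closedNbhd G v := by
            intro w hw hcw; have := hdom.2.2 w hw hcw; rwa [hπv] at this
          have h2 : ∀ w ∈ S, w ∈ closedNbhd G v → w ∈ closedNbhd G σ := by
            intro w hw hcw; have := hπ₀'.2.2 w hw hcw; rwa [hπ₀σ] at this
          set sub : V → V := fun x => if x = σ then v else x with hsub
          have hsubinj : ∀ x ∈ S \ {v}, ∀ y ∈ S \ {v}, sub x = sub y → x = y := by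
            intro x hx y hy hxy
            simp only [hsub] at hxy
            by_cases hxσ : x = σ <;> by_cases hyσ : y = σ
            · rw [hxσ, hyσ]
            · rw [if_pos hxσ, if_neg hyσ] at hxy; exact absurd hxy.symm hy.2
            · rw [if_neg hxσ, if_pos hyσ] at hxy; exact absurd hxy hx.2
            · rwa [if_neg hxσ, if_neg hyσ] at hxy
          refine ⟨rest.map sub, ?_, ?_, ?_⟩
          · refine List.Nodup.map_on ?_ hrestnodup
            intro x hx y hy
            exact hsubinj x ((htmem x).mp hx) y ((htmem y).mp hy)
          · intro x
            simp only [List.mem_map]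
            constructor
            · rintro ⟨u, hu, rfl⟩
              have hu' := (htmem u).mp hu
              by_cases huσ : u = σ
              · simp only [hsub, if_pos huσ]
                exact ⟨hvS, hvσ⟩
              · simp only [hsub, if_neg huσ]
                exact ⟨hu'.1, huσ⟩
            · rintro ⟨hxS, hxσ⟩
              by_cases hxv : x = v
              · refine ⟨σ, (htmem σ).mpr hσrest, ?_⟩
                simp [hsub, hxv]
              · have hxσ' : x ≠ σ := fun h => hxσ (by simp [h])
                refine ⟨x, (htmem x).mpr ⟨hxS, hxv⟩, ?_⟩
                simp [hsub, hxσ']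
          · intro i hi hi'
            rw [List.length_map] at hi hi'
            obtain ⟨π₂, hπ₂⟩ := htcond i hi hi'
            have hgetmem : rest[i] ∈ rest.drop i := by
              rw [List.drop_eq_getElem_cons hi]
              exact List.mem_cons_self
            have hdropsub : ∀ u ∈ rest.drop i, u ∈ S \ {v} := by
              intro u hu
              exact (htmem u).mp (List.mem_of_mem_drop hu)
            refine ⟨sub π₂, ?_, ?_, ?_⟩
            · show sub π₂ ∈ {w | w ∈ (rest.map sub).drop i}
              rw [← List.map_drop]
              exact List.mem_map_of_mem (f := sub) (hπ₂.1)
            · have h1' := hπ₂.2.1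
              intro hcontra
              have hget : (rest.map sub)[i] = sub (rest[i]'hi) := by
                simp
              rw [hget] at hcontra
              exact h1' (hsubinj π₂ (hdropsub π₂ hπ₂.1) (rest[i]'hi)
                (hdropsub _ hgetmem) hcontra)
            · intro w hw hcw
              rw [Set.mem_setOf_eq, ← List.map_drop, List.mem_map] at hw
              obtain ⟨u, hu, rfl⟩ := hw
              have huS := hdropsub u hu
              have hρS := hdropsub _ hgetmem
              have hπ₂S := hdropsub π₂ hπ₂.1
              have hget : (rest.map sub)[i] = sub (rest[i]'hi) := by simp
              rw [hget] at hcw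
              have hcu : u ∈ closedNbhd G (rest[i]'hi) :=
                (twin_clN h1 h2 hρS.1 hρS.2 huS.1 huS.2).mpr hcw
              have := hπ₂.2.2 u hu hcu
              exact (twin_clN h1 h2 hπ₂S.1 hπ₂S.2 huS.1 huS.2).mp this
        · -- non-twin case: find a dominator π' of σ in S with π' ≠ v
          have hexists : ∃ π', DominatedIn G S σ π' ∧ π' ≠ v := by
            by_cases hπv : π = v
            · have hπ₀σ : π₀ ≠ σ := fun h => htwin ⟨hπv, h⟩
              refine ⟨π₀, ⟨hπ₀'.1, hπ₀σ, ?_⟩, hπ₀'.2.1⟩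
              intro w hw hcw
              have := hdom.2.2 w hw hcw
              rw [hπv] at this
              exact hπ₀'.2.2 w hw this
            · exact ⟨π, hdom, hπv⟩
          obtain ⟨π', hπ', hπ'v⟩ := hexists
          have hπ'Sv : π' ∈ S \ {v} := ⟨hπ'.1, hπ'v⟩
          have hdom' : DominatedIn G (S \ {v}) σ π' :=
            dominatedIn_mono Set.diff_subset hπ'Sv hπ'
          obtain ⟨l₂, h2n, h2m, h2c⟩ :=
            IH (S \ {v}) hrestnodup htmem htcond σ π' hσrest hdom'
          -- dominator of v in S \ {σ}
          have hdomv : ∃ π₁, DominatedIn G (S \ {σ}) v π₁ := by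
            by_cases hπ₀σ : π₀ = σ
            · refine ⟨π', ⟨⟨hπ'.1, hπ'.2.1⟩, hπ'v, ?_⟩⟩
              intro w hw hcw
              have := hπ₀'.2.2 w hw.1 hcw
              rw [hπ₀σ] at this
              exact hπ'.2.2 w hw.1 this
            · refine ⟨π₀, ⟨⟨hπ₀'.1, hπ₀σ⟩, hπ₀'.2.1, ?_⟩⟩
              intro w hw hcw
              exact hπ₀'.2.2 w hw.1 hcw
          obtain ⟨π₁, hπ₁⟩ := hdomv
          have hvnotl₂ : v ∉ l₂ := by
            intro h
            exact ((h2m v).mp h).1.2 rfl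
          refine ⟨v :: l₂, List.nodup_cons.mpr ⟨hvnotl₂, h2n⟩, ?_, ?_⟩
          · intro x
            rw [List.mem_cons]
            constructor
            · rintro (rfl | hx)
              · exact ⟨hvS, hvσ⟩
              · have := (h2m x).mp hx
                exact ⟨this.1.1, this.2⟩
            · rintro ⟨hxS, hxσ⟩
              by_cases hxv : x = v
              · exact Or.inl hxv
              · exact Or.inr ((h2m x).mpr ⟨⟨hxS, hxv⟩, hxσ⟩)
          · intro i hi hi'
            match i with
            | 0 =>
              refine ⟨π₁, ?_⟩
              have hset : {w | w ∈ (v :: l₂).drop 0} = S \ {σ} := by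
                ext x
                rw [List.drop_zero, Set.mem_setOf_eq, List.mem_cons]
                constructor
                · rintro (rfl | hx)
                  · exact ⟨hvS, hvσ⟩
                  · have := (h2m x).mp hx
                    exact ⟨this.1.1, this.2⟩
                · rintro ⟨hxS, hxσ⟩
                  by_cases hxv : x = v
                  · exact Or.inl hxv
                  · exact Or.inr ((h2m x).mpr ⟨⟨hxS, hxv⟩, hxσ⟩)
              rw [List.getElem_cons_zero]
              exact dominatedIn_congr hset.symm hπ₁
            | (j + 1) =>
              have hj : j < l₂.length := by simpa using hi
              have hj' : j < l₂.length - 1 := by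
                simp only [List.length_cons] at hi'
                omega
              obtain ⟨π₂, hπ₂⟩ := h2c j hj hj'
              exact ⟨π₂, by simpa using hπ₂⟩

end DismantleAux

/-- If `Γ` is a finite dismantlable graph and `σ` is a dominated vertex,
then the subgraph induced on the complement of `{σ}` is dismantlable. -/
theorem dismantlableOn_compl_of_dominated {V : Type*} [Fintype V] (G : SimpleGraph V)
    (hG : Dismantlable G) (σ : V) (hσ : ∃ π, DominatedIn G Set.univ σ π) :
    DismantlableOn G {v | v ≠ σ} := by
  obtain ⟨π, hπ⟩ := hσ
  obtain ⟨l, h1, h2, h3⟩ := hG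
  have := DismantleAux.key G l Set.univ h1 h2 h3 σ π (Set.mem_univ σ) hπ
  obtain ⟨l', hn, hm, hc⟩ := this
  refine ⟨l', hn, fun x => (hm x).trans ?_, hc⟩
  simp [Set.mem_diff]
end

section
/- Let Γ be a finite graph with vertex set V such that there exist a vertex σ ∈ V and a σ-projection on Γ. Then Γ is dismantlable. -/
open SimpleGraph

variable {V : Type*}

/-- Every pair either contains an element different from `c`, or consists of `c` alone. -/
lemma sym2_cases_ne {V : Type*} (z : Sym2 V) (c : V) :
    (∃ x ∈ z, x ≠ c) ∨ (c ∈ z ∧ ∀ x ∈ z, x = c) := by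
  induction z using Sym2.ind with
  | _ a b =>
    by_cases ha : a = c
    · by_cases hb : b = c
      · refine Or.inr ⟨ha ▸ Sym2.mem_mk_left a b, ?_⟩
        intro x hx
        rcases Sym2.mem_iff.mp hx with h | h
        · exact h.trans ha
        · exact h.trans hb
      · exact Or.inl ⟨b, Sym2.mem_mk_right a b, hb⟩
    · exact Or.inl ⟨a, Sym2.mem_mk_left a b, ha⟩

/-- A `TransGen`-path can be realized by an explicit indexed walk. -/
lemma transGen_path {α : Type*} {E : α → α → Prop} {a b : α}
    (h : Relation.TransGen E a b) :
    ∃ n : ℕ, 0 < n ∧ ∃ g : ℕ → α, g 0 = a ∧ g n = b ∧ ∀ i < n, E (g i) (g (i + 1)) := by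
  induction h with
  | @single c hac =>
    refine ⟨1, one_pos, fun i => if i = 0 then a else c, by simp, by simp, ?_⟩
    intro i hi
    have : i = 0 := by omega
    subst this
    simpa using hac
  | @tail b c hab hbc ih =>
    obtain ⟨n, hn, g, hg0, hgn, hstep⟩ := ih
    refine ⟨n + 1, Nat.succ_pos _, fun i => if i = n + 1 then c else g i, ?_, by simp, ?_⟩
    · simp only [if_neg (by omega : (0:ℕ) ≠ n + 1)]
      exact hg0
    · intro i hi
      rcases Nat.lt_succ_iff_lt_or_eq.mp hi with h | h
      · simp only [if_neg (by omega : i ≠ n + 1), if_neg (by omega : i + 1 ≠ n + 1)]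
        exact hstep i h
      · have h1 : i ≠ n + 1 := by omega
        have h2 : i + 1 = n + 1 := by omega
        simp only [if_neg h1, if_pos h2]
        rw [h, hgn]
        exact hbc

/-- Main induction: on a finite set `R` containing `σ`, carrying a "relative" projection
whose pairs live in `R`, whose exposedness holds for subsets of `R`, and whose `Π*`-edges
away from `σ` are contained in a fixed transitive irreflexive relation `Q`, the induced
subgraph on `R` is dismantlable. -/
lemma dismantle_main {V : Type*} (G : SimpleGraph V) (σ : V)
    (Q : V → V → Prop) (hQt : Transitive Q) (hQi : Irreflexive Q) :
    ∀ (n : ℕ) (R : Finset V) (Pr : V → Finset (Sym2 V)), R.card ≤ n → σ ∈ R →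
      (∀ ρ ∈ R, ρ ≠ σ → ∀ p ∈ Pr ρ, ∀ π ∈ p, π ∈ R) →
      (∀ R' : Finset V, R' ⊆ R → (∃ ρ ∈ R', ρ ≠ σ) →
        ∃ ρ ∈ R', ρ ≠ σ ∧ ∃ p ∈ Pr ρ, ∀ π ∈ p,
          ∀ w ∈ R', w ∈ closedNbhd G ρ → w ∈ closedNbhd G π) →
      (∀ ρ ∈ R, ρ ≠ σ → ∀ p ∈ Pr ρ, ∀ π ∈ p, π ≠ σ → Q ρ π) →
      DismantlableOn G ↑R := by
  classical
  intro n
  induction n with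
  | zero =>
    intro R Pr hcard hσ _ _ _
    have : 0 < R.card := Finset.card_pos.mpr ⟨σ, hσ⟩
    omega
  | succ n ih =>
    intro R Pr hcard hσ hin hexp hq
    by_cases hall : ∀ ρ ∈ R, ρ = σ
    · refine ⟨[σ], List.nodup_singleton σ, ?_, ?_⟩
      · intro v
        simp only [List.mem_singleton, Finset.mem_coe]
        exact ⟨fun h => h ▸ hσ, fun hv => hall v hv⟩
      · intro i h h'
        simp only [List.length_singleton] at h h'
        omega
    · push_neg at hall
      obtain ⟨rr, hrrR, hrrσ, pb, hpb, hdom⟩ := hexp R (Finset.Subset.refl R) hall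
      obtain ⟨pp, hppp, hppne⟩ : ∃ x ∈ pb, x ≠ rr := by
        rcases sym2_cases_ne pb rr with h | ⟨hmem, _⟩
        · exact h
        · exact absurd (hq rr hrrR hrrσ pb hpb rr hmem hrrσ) (hQi rr)
      have hppR : pp ∈ R := hin rr hrrR hrrσ pb hpb pp hppp
      have hdomπ : ∀ w ∈ R, w ∈ closedNbhd G rr → w ∈ closedNbhd G pp := hdom pp hppp
      set s : V → V := fun v => if v = rr then pp else v with hs
      have hsrr : s rr = pp := by simp [hs]
      have hsne : ∀ v, v ≠ rr → s v = v := fun v hv => by simp [hs, hv]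
      have hkey : DismantlableOn G ↑(R.erase rr) := by
        apply ih (R.erase rr) (fun ρ => (Pr ρ).image (Sym2.map s))
        · have := Finset.card_erase_of_mem hrrR
          omega
        · exact Finset.mem_erase.mpr ⟨Ne.symm hrrσ, hσ⟩
        · intro ρ hρ hρσ p' hp' π' hπ'
          obtain ⟨p, hp, rfl⟩ := Finset.mem_image.mp hp'
          obtain ⟨π, hπ, rfl⟩ := Sym2.mem_map.mp hπ'
          have hρR : ρ ∈ R := Finset.mem_of_mem_erase hρ
          by_cases hc : π = rr
          · rw [hc, hsrr]
            exact Finset.mem_erase.mpr ⟨hppne, hppR⟩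
          · rw [hsne π hc]
            exact Finset.mem_erase.mpr ⟨hc, hin ρ hρR hρσ p hp π hπ⟩
        · intro R' hR' hex
          obtain ⟨ρ, hρ, hρσ, p, hp, hd⟩ :=
            hexp R' (hR'.trans (Finset.erase_subset _ _)) hex
          refine ⟨ρ, hρ, hρσ, p.map s, Finset.mem_image_of_mem _ hp, ?_⟩
          intro π' hπ' w hw hwN
          obtain ⟨π, hπ, rfl⟩ := Sym2.mem_map.mp hπ'
          by_cases hc : π = rr
          · have h1 : w ∈ closedNbhd G rr := hc ▸ hd π hπ w hw hwN
            have h2 : w ∈ R := Finset.mem_of_mem_erase ((hR'.trans (Finset.Subset.refl _)) hw)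
            rw [hc, hsrr]
            exact hdomπ w h2 h1
          · rw [hsne π hc]
            exact hd π hπ w hw hwN
        · intro ρ hρ hρσ p' hp' π' hπ' hπ'σ
          obtain ⟨p, hp, rfl⟩ := Finset.mem_image.mp hp'
          obtain ⟨π, hπ, rfl⟩ := Sym2.mem_map.mp hπ'
          have hρR : ρ ∈ R := Finset.mem_of_mem_erase hρ
          by_cases hc : π = rr
          · rw [hc, hsrr] at hπ'σ ⊢
            have h1 : Q ρ rr := by
              have := hq ρ hρR hρσ p hp π hπ (by rw [hc]; exact hrrσ)
              rwa [hc] at this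
            exact hQt h1 (hq rr hrrR hrrσ pb hpb pp hppp hπ'σ)
          · rw [hsne π hc] at hπ'σ ⊢
            exact hq ρ hρR hρσ p hp π hπ hπ'σ
      obtain ⟨l', hnd', hmem', hdom'⟩ := hkey
      have hrrl' : rr ∉ l' := fun h => by
        have := Finset.mem_coe.mp ((hmem' rr).mp h)
        exact absurd this (by simp)
      refine ⟨rr :: l', List.nodup_cons.mpr ⟨hrrl', hnd'⟩, ?_, ?_⟩
      · intro v
        simp only [List.mem_cons]
        constructor
        · rintro (rfl | h)
          · exact Finset.mem_coe.mpr hrrR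
          · exact Finset.mem_coe.mpr
              (Finset.mem_of_mem_erase (Finset.mem_coe.mp ((hmem' v).mp h)))
        · intro hv
          by_cases hc : v = rr
          · exact Or.inl hc
          · exact Or.inr ((hmem' v).mpr (Finset.mem_coe.mpr
              (Finset.mem_erase.mpr ⟨hc, Finset.mem_coe.mp hv⟩)))
      · intro i h h'
        match i, h, h' with
        | 0, h, h' =>
          refine ⟨pp, ?_, hppne, ?_⟩
          · show pp ∈ {w | w ∈ (rr :: l').drop 0}
            simp only [List.drop_zero, Set.mem_setOf_eq, List.mem_cons]
            exact Or.inr ((hmem' pp).mpr (Finset.mem_coe.mpr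
              (Finset.mem_erase.mpr ⟨hppne, hppR⟩)))
          · intro w hw hwN
            simp only [List.drop_zero, Set.mem_setOf_eq, List.mem_cons] at hw
            have hwR : w ∈ R := by
              rcases hw with rfl | hw
              · exact hrrR
              · exact Finset.mem_of_mem_erase (Finset.mem_coe.mp ((hmem' w).mp hw))
            simpa using hdomπ w hwR (by simpa using hwN)
        | (j + 1), h, h' =>
          simp only [List.length_cons] at h h'
          have hj : j < l'.length := by omega
          have hj' : j < l'.length - 1 := by omega
          have hget : (rr :: l')[j + 1]'(by simpa using h) = l'[j]'hj :=
            List.getElem_cons_succ ..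
          have hdrop : (rr :: l').drop (j + 1) = l'.drop j := List.drop_succ_cons ..
          rw [hget, hdrop]
          exact hdom' j hj hj'

/-- A finite graph admitting a `σ`-projection is dismantlable. -/
theorem dismantlable_of_sigmaProjection {V : Type*} [Fintype V] (G : SimpleGraph V)
    (σ : V) (Pr : V → Finset (Sym2 V)) (hPr : IsSigmaProjection G σ Pr) :
    Dismantlable G := by
  classical
  set E : V → V → Prop := fun x y => x ≠ σ ∧ y ≠ σ ∧ y ∈ PiStar Pr x with hE
  have hirr : Irreflexive (Relation.TransGen E) := by
    intro a ha
    apply hPr.acyclic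
    obtain ⟨n, hn, g, hg0, hgn, hstep⟩ := transGen_path ha
    haveI : NeZero n := ⟨hn.ne'⟩
    refine ⟨n, hn, fun i => g i.val, ?_⟩
    intro i
    have hiv : i.val < n := ZMod.val_lt i
    refine ⟨(hstep i.val hiv).1, ?_⟩
    have hcast : ((i.val : ℕ) : ZMod n) = i := by
      rw [ZMod.natCast_val, ZMod.cast_id]
    have hval : (i + 1).val = (i.val + 1) % n := by
      conv_lhs => rw [show i + 1 = ((i.val + 1 : ℕ) : ZMod n) by
        rw [Nat.cast_add, Nat.cast_one, hcast]]
      exact ZMod.val_natCast _ _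
    show g ((i + 1).val) ∈ PiStar Pr (g i.val)
    by_cases hc : i.val + 1 < n
    · rw [hval, Nat.mod_eq_of_lt hc]
      exact (hstep i.val hiv).2.2
    · have hn1 : i.val + 1 = n := by omega
      have hlast := (hstep i.val hiv).2.2
      rw [hn1, hgn] at hlast
      rw [hval, hn1, Nat.mod_self, hg0]
      exact hlast
  have hmain := dismantle_main G σ (Relation.TransGen E)
    (fun _ _ _ h1 h2 => h1.trans h2) hirr
    (Fintype.card V) Finset.univ Pr
    (le_of_eq Finset.card_univ)
    (Finset.mem_univ σ)
    (fun ρ _ _ p _ π _ => Finset.mem_univ π)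
    (fun R' _ hex => hPr.exposed R' hex)
    (fun ρ _ hρσ p hp π hπ hπσ =>
      Relation.TransGen.single ⟨hρσ, hπσ, ⟨p, hp, hπ⟩⟩)
  show DismantlableOn G Set.univ
  simpa using hmain
end

section
/- Let Γ be a graph with vertex set V, let σ ∈ V, let Π be a σ-projection on Γ, and let R ⊆ V be a nonempty finite Π-convex subset. Then σ ∈ R. -/
open SimpleGraph

variable {V : Type*}

/-- If `Π` is a `σ`-projection and `R` is a nonempty finite `Π`-convex
set of vertices, then `σ ∈ R`. -/
theorem sigma_mem_of_piConvex {V : Type*} (G : SimpleGraph V)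
    (σ : V) (Pr : V → Finset (Sym2 V)) (hPr : IsSigmaProjection G σ Pr)
    (R : Set V) (hfin : R.Finite) (hne : R.Nonempty) (hconv : PiConvex σ Pr R) :
    σ ∈ R := by
  by_contra hσ
  classical
  have hstep : ∀ ρ ∈ R, ∃ v, v ∈ R ∧ v ∈ PiStar Pr ρ := by
    intro ρ hρ
    have hρσ : ρ ≠ σ := fun h => hσ (h ▸ hρ)
    obtain ⟨p, hp⟩ := hPr.nonempty ρ hρσ
    obtain ⟨v, hv, hvR⟩ := hconv ρ hρ hρσ p hp
    exact ⟨v, hvR, ⟨p, hp, hv⟩⟩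
  set step : V → V := fun ρ => if h : ρ ∈ R then (hstep ρ h).choose else ρ with hstepdef
  have hstepR : ∀ ρ ∈ R, step ρ ∈ R := by
    intro ρ h
    simp only [hstepdef, dif_pos h]
    exact (hstep ρ h).choose_spec.1
  have hstepP : ∀ ρ ∈ R, step ρ ∈ PiStar Pr ρ := by
    intro ρ h
    simp only [hstepdef, dif_pos h]
    exact (hstep ρ h).choose_spec.2
  obtain ⟨ρ₀, hρ₀⟩ := hne
  have hiter : ∀ n, step^[n] ρ₀ ∈ R := by
    intro n; induction n with
    | zero => exact hρ₀
    | succ n ih => rw [Function.iterate_succ_apply']; exact hstepR _ ih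
  have : Finite R := hfin
  obtain ⟨a, b, hab, heq⟩ :=
    Finite.exists_ne_map_eq_of_infinite (fun n : ℕ => (⟨step^[n] ρ₀, hiter n⟩ : R))
  have heq' : step^[a] ρ₀ = step^[b] ρ₀ := congrArg Subtype.val heq
  obtain ⟨a, b, hlt, heq'⟩ : ∃ a b, a < b ∧ step^[a] ρ₀ = step^[b] ρ₀ := by
    rcases lt_or_gt_of_ne hab with h | h
    · exact ⟨a, b, h, heq'⟩
    · exact ⟨b, a, h, heq'.symm⟩
  set x := step^[a] ρ₀ with hx
  set m := b - a with hm
  have hm0 : 0 < m := by omega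
  haveI : NeZero m := ⟨hm0.ne'⟩
  have hper : Function.IsPeriodicPt step m x := by
    show step^[m] x = x
    rw [hx, ← Function.iterate_add_apply, hm]
    rw [show b - a + a = b by omega]
    exact heq'.symm
  have hxR : ∀ k, step^[k] x ∈ R := by
    intro k
    rw [hx, ← Function.iterate_add_apply]
    exact hiter _
  apply hPr.acyclic
  refine ⟨m, hm0, fun i => step^[i.val] x, fun i => ?_⟩
  constructor
  · exact fun h => hσ (h ▸ hxR i.val)
  · have hval : (i + 1).val = (i.val + 1) % m := by
      rw [ZMod.val_add, ZMod.val_one_eq_one_mod]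
      conv_rhs => rw [Nat.add_mod, Nat.mod_eq_of_lt (ZMod.val_lt i)]
    show step^[(i + 1).val] x ∈ PiStar Pr (step^[i.val] x)
    have h2 : step^[(i + 1).val] x = step (step^[i.val] x) := by
      rw [hval, hper.iterate_mod_apply, Function.iterate_succ_apply']
    rw [h2]
    exact hstepP _ (hxR i.val)
end

section
/- Let Γ be a graph with vertex set V admitting a σ-projection Π for some σ ∈ V, and let R ⊆ V be a nonempty finite Π-convex subset. Then the subgraph of Γ induced on R is dismantlable. -/
open SimpleGraph

variable {V : Type*}

lemma exists_exposed_list {V : Type*} (G : SimpleGraph V) (σ : V) (Pr : V → Finset (Sym2 V))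
    (hPr : IsSigmaProjection G σ Pr) (S : Finset V) :
    ∃ l : List V, l.Nodup ∧ (∀ v, v ∈ l ↔ v ∈ S) ∧
      (∀ i (h : i < l.length), l[i] = σ → i + 1 = l.length) ∧
      (∀ i (h : i < l.length), l[i] ≠ σ → ∃ p ∈ Pr l[i], ∀ π ∈ p,
        ∀ w ∈ l.drop i, w ∈ closedNbhd G l[i] → w ∈ closedNbhd G π) := by
  classical
  induction S using Finset.strongInduction with
  | _ S ih =>
    by_cases hex : ∃ ρ ∈ S, ρ ≠ σ
    · obtain ⟨ρ, hρS, hρσ, p, hp, hdom⟩ := hPr.exposed S hex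
      obtain ⟨l', h1, h2, h3, h4⟩ := ih (S.erase ρ) (Finset.erase_ssubset hρS)
      have hρl' : ρ ∉ l' := fun h => by simp [h2 ρ] at h
      refine ⟨ρ :: l', List.nodup_cons.2 ⟨hρl', h1⟩, ?_, ?_, ?_⟩
      · intro v
        simp only [List.mem_cons, h2, Finset.mem_erase]
        constructor
        · rintro (rfl | ⟨-, hv⟩) <;> [exact hρS; exact hv]
        · intro hv
          rcases eq_or_ne v ρ with rfl | hne
          · exact Or.inl rfl
          · exact Or.inr ⟨hne, hv⟩
      · intro i h hσ
        match i with
        | 0 => exact absurd hσ hρσ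
        | (j+1) =>
          have hj : j < l'.length := by simpa using h
          have := h3 j hj (by simpa using hσ)
          simp [List.length_cons]
          omega
      · intro i h hne
        match i with
        | 0 =>
          refine ⟨p, hp, fun π hπ w hw hwN => ?_⟩
          have hwS : w ∈ S := by
            rcases List.mem_cons.1 hw with rfl | hw'
            · exact hρS
            · exact Finset.mem_of_mem_erase ((h2 w).1 hw')
          exact hdom π hπ w hwS hwN
        | (j+1) =>
          have hj : j < l'.length := by simpa using h
          have hgg : (ρ :: l')[j+1] = l'[j] := rfl
          rw [hgg] at hne ⊢
          obtain ⟨q, hq, hdq⟩ := h4 j hj hne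
          exact ⟨q, hq, fun π hπ w hw hwN => hdq π hπ w (by simpa using hw) hwN⟩
    · push_neg at hex
      refine ⟨S.toList, S.nodup_toList, fun v => by simp, ?_, ?_⟩
      · intro i h hσ
        have hcard : S.toList.length = S.card := S.length_toList
        have hsub : S.card ≤ 1 := by
          apply Finset.card_le_one.2
          intro a ha b hb
          rw [hex a ha, hex b hb]
        omega
      · intro i h hne
        exact absurd (hex _ (Finset.mem_toList.1 (List.getElem_mem h))) hne


/-- If `Π` is a `σ`-projection and `R` is a nonempty finite `Π`-convex
set of vertices, then the subgraph induced on `R` is dismantlable. -/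
theorem dismantlableOn_of_piConvex {V : Type*} (G : SimpleGraph V)
    (σ : V) (Pr : V → Finset (Sym2 V)) (hPr : IsSigmaProjection G σ Pr)
    (R : Set V) (hfin : R.Finite) (hne : R.Nonempty) (hconv : PiConvex σ Pr R) :
    DismantlableOn G R := by
  classical
  obtain ⟨l, hnd, hmem, hσpos, hexp⟩ := exists_exposed_list G σ Pr hPr hfin.toFinset
  have hmemR : ∀ v, v ∈ l ↔ v ∈ R := fun v => by rw [hmem]; exact hfin.mem_toFinset
  refine ⟨l, hnd, hmemR, ?_⟩
  intro i hi hlt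
  by_contra hno
  push_neg at hno
  have hnodom : ∀ v, v ∈ l.drop i → v ≠ l[i]'hi →
      (∀ w ∈ l.drop i, w ∈ closedNbhd G (l[i]'hi) → w ∈ closedNbhd G v) → False := by
    intro v h1 h2 h3
    exact hno v ⟨h1, h2, fun w hw => h3 w hw⟩
  have hdropmono : ∀ (j k : ℕ), j ≤ k → ∀ w : V, w ∈ l.drop k → w ∈ l.drop j := by
    intro j k hjk w hw
    have hh : l.drop k = (l.drop j).drop (k - j) := by
      rw [List.drop_drop]; congr 1; omega
    rw [hh] at hw
    exact List.mem_of_mem_drop hw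
  set P : V → Prop := fun x => ∃ j : ℕ, ∃ hj : j < l.length, j ≤ i ∧ x = l[j]'hj ∧
      ∀ w ∈ l.drop i, w ∈ closedNbhd G (l[i]'hi) → w ∈ closedNbhd G x with hPdef
  have hPne : ∀ x, P x → x ≠ σ := by
    rintro x ⟨j, hj, hji, rfl, -⟩ hxσ
    have := hσpos j hj hxσ
    omega
  have hPmem : ∀ x, P x → x ∈ R := by
    rintro x ⟨j, hj, hji, rfl, -⟩
    exact (hmemR _).1 (List.getElem_mem hj)
  have hstep : ∀ x, P x → ∃ y, P y ∧ y ∈ PiStar Pr x := by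
    rintro x ⟨j, hj, hji, rfl, hsub⟩
    have hjσ : l[j]'hj ≠ σ := fun h => by have := hσpos j hj h; omega
    obtain ⟨p, hp, hdomj⟩ := hexp j hj hjσ
    obtain ⟨v, hvp, hvR⟩ := hconv _ ((hmemR _).1 (List.getElem_mem hj)) hjσ p hp
    obtain ⟨j', hj', hvj'⟩ := List.mem_iff_getElem.1 ((hmemR v).2 hvR)
    have hsubv : ∀ w ∈ l.drop i, w ∈ closedNbhd G (l[i]'hi) → w ∈ closedNbhd G v := by
      intro w hw hwN
      exact hdomj v hvp w (hdropmono j i hji w hw) (hsub w hw hwN)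
    by_cases hj'i : j' ≤ i
    · exact ⟨v, ⟨j', hj', hj'i, hvj'.symm, hsubv⟩, ⟨p, hp, hvp⟩⟩
    · exfalso
      push_neg at hj'i
      have hvdrop : v ∈ l.drop i := by
        have hlen : j' - i < (l.drop i).length := by
          rw [List.length_drop]; omega
        have hd : (l.drop i)[j' - i]'hlen = l[j']'hj' := by
          rw [List.getElem_drop]
          congr 1
          omega
        rw [← hvj', ← hd]
        exact List.getElem_mem hlen
      have hvne : v ≠ l[i]'hi := by
        intro h
        have : l[j']'hj' = l[i]'hi := by rw [hvj', h]
        have := (hnd.getElem_inj_iff).1 this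
        omega
      exact hnodom v hvdrop hvne hsubv
  have hstep' : ∀ x : V, ∃ y : V, P x → P y ∧ y ∈ PiStar Pr x := by
    intro x
    by_cases h : P x
    · obtain ⟨y, hy⟩ := hstep x h
      exact ⟨y, fun _ => hy⟩
    · exact ⟨x, fun h' => absurd h' h⟩
  choose g hg using hstep'
  let F : ℕ → V := fun n => Nat.rec (l[i]'hi) (fun _ x => g x) n
  have hFs : ∀ n, F (n+1) = g (F n) := fun n => rfl
  have hPF : ∀ n, P (F n) := by
    intro n
    induction n with
    | zero => exact ⟨i, hi, le_refl i, rfl, fun w hw hwN => hwN⟩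
    | succ n ihn =>
      rw [hFs n]
      exact (hg (F n) ihn).1
  have hedge : ∀ n, F (n+1) ∈ PiStar Pr (F n) := by
    intro n
    rw [hFs n]
    exact (hg (F n) (hPF n)).2
  have key : ∀ a b : ℕ, a < b → F a = F b → False := by
    intro a b hab heq
    have hm0 : 0 < b - a := by omega
    haveI : NeZero (b - a) := ⟨hm0.ne'⟩
    refine hPr.acyclic ⟨b - a, hm0, fun z => F (a + z.val), fun z => ⟨hPne _ (hPF _), ?_⟩⟩
    have hval : (z + 1).val = (z.val + 1) % (b - a) := by
      have h1 : ((z.val + 1 : ℕ) : ZMod (b - a)) = z + 1 := by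
        push_cast
        simp [ZMod.natCast_val, ZMod.cast_id]
      rw [← h1, ZMod.val_natCast]
    show F (a + (z + 1).val) ∈ PiStar Pr (F (a + z.val))
    rcases Nat.lt_or_ge (z.val + 1) (b - a) with hlt2 | hge
    · rw [hval, Nat.mod_eq_of_lt hlt2]
      have h2 : a + (z.val + 1) = (a + z.val) + 1 := by omega
      rw [h2]
      exact hedge _
    · have hzv : z.val < b - a := ZMod.val_lt z
      have hm : z.val + 1 = b - a := by omega
      rw [hval, hm, Nat.mod_self]
      have h3 : b = (a + z.val) + 1 := by omega
      have h2 : F (a + 0) = F ((a + z.val) + 1) := by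
        rw [Nat.add_zero, heq]
        exact congrArg F h3
      rw [h2]
      exact hedge _
  obtain ⟨a, -, b, -, hab, habeq⟩ := Set.Infinite.exists_ne_map_eq_of_mapsTo
    (Set.infinite_univ (α := ℕ)) (fun n _ => hPmem (F n) (hPF n)) hfin
  rcases hab.lt_or_gt with h | h
  · exact key a b h habeq
  · exact key b a h habeq.symm
end

section
/- Let H be a group of automorphisms of a graph Γ with vertex set V. Suppose there exist σ ∈ V, a σ-projection Π_σ on Γ, and a nonempty finite Π_σ-convex subset R ⊆ V. Suppose moreover that the orbit set HR = {hρ : h ∈ H, ρ ∈ R} is finite, that for every σ' in the orbit S = Hσ there is a σ'-projection Π_{σ'} for which R is Π_{σ'}-convex, and that the family {Π_{σ'}}_{σ'∈S} is H-equivariant. Then the subgraph of Γ induced on HR is dismantlable and Γ contains an H-invariant clique. -/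
open SimpleGraph

variable {V : Type*}

-- infrastructure
lemma mem_closedNbhd {G : SimpleGraph V} {ρ w : V} :
    w ∈ closedNbhd G ρ ↔ w = ρ ∨ G.Adj ρ w := by
  simp [closedNbhd]

lemma closedNbhd_comm {G : SimpleGraph V} {ρ w : V} :
    w ∈ closedNbhd G ρ ↔ ρ ∈ closedNbhd G w := by
  rw [mem_closedNbhd, mem_closedNbhd]
  constructor
  · rintro (rfl | h)
    · exact Or.inl rfl
    · exact Or.inr h.symm
  · rintro (rfl | h)
    · exact Or.inl rfl
    · exact Or.inr h.symm

/-- `N(u) ∩ S ⊆ N(v)`. -/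
def leD (G : SimpleGraph V) (S : Set V) (u v : V) : Prop :=
  ∀ w ∈ S, w ∈ closedNbhd G u → w ∈ closedNbhd G v

lemma leD.mono {G : SimpleGraph V} {S T : Set V} {u v : V} (h : leD G S u v) (hTS : T ⊆ S) :
    leD G T u v := fun w hw => h w (hTS hw)

lemma leD.trans {G : SimpleGraph V} {S : Set V} {u v x : V} (h : leD G S u v)
    (h' : leD G S v x) : leD G S u x := fun w hw hn => h' w hw (h w hw hn)

def GoodList (G : SimpleGraph V) (l : List V) (S : Set V) : Prop :=
  l.Nodup ∧ (∀ v, v ∈ l ↔ v ∈ S) ∧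
    ∀ (i : ℕ) (h : i < l.length), i < l.length - 1 →
      ∃ π, DominatedIn G {w | w ∈ l.drop i} (l[i]'h) π

lemma dismantlableOn_iff {G : SimpleGraph V} {S : Set V} :
    DismantlableOn G S ↔ ∃ l, GoodList G l S := Iff.rfl

lemma goodList_nil (G : SimpleGraph V) : GoodList G [] (∅ : Set V) := by
  refine ⟨List.nodup_nil, by simp, ?_⟩
  intro i h; simp at h

lemma goodList_singleton (G : SimpleGraph V) (a : V) : GoodList G [a] {a} := by
  refine ⟨List.nodup_singleton a, by simp, ?_⟩
  intro i h h2; simp at h2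

lemma goodList_cons {G : SimpleGraph V} {l : List V} {S' : Set V} {a : V}
    (hl : GoodList G l S') (ha : a ∉ S')
    (hdom : ∃ π, DominatedIn G (insert a S') a π) :
    GoodList G (a :: l) (insert a S') := by
  obtain ⟨hnd, hmem, hdoml⟩ := hl
  refine ⟨?_, ?_, ?_⟩
  · exact List.nodup_cons.2 ⟨fun h => ha ((hmem a).1 h), hnd⟩
  · intro v; simp [hmem v]
  · intro i h h2
    match i with
    | 0 =>
      have hset : {w | w ∈ (a :: l).drop 0} = insert a S' := by
        ext w; simp [hmem w, Set.mem_insert_iff]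
      rw [show ((a :: l)[0]'h) = a from rfl, hset]
      exact hdom
    | (j+1) =>
      have hj : j < l.length := by simpa using h
      have hj2 : j < l.length - 1 := by
        simp only [List.length_cons] at h2; omega
      have := hdoml j hj hj2
      simpa using this

lemma goodList_tail {G : SimpleGraph V} {a : V} {t : List V} {S : Set V}
    (hl : GoodList G (a :: t) S) : GoodList G t (S \ {a}) := by
  obtain ⟨hnd, hmem, hdoml⟩ := hl
  have hat : a ∉ t := (List.nodup_cons.1 hnd).1
  refine ⟨(List.nodup_cons.1 hnd).2, ?_, ?_⟩
  · intro v
    constructor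
    · intro hv
      refine ⟨(hmem v).1 (List.mem_cons_of_mem a hv), ?_⟩
      rintro rfl; exact hat hv
    · rintro ⟨hvS, hva⟩
      rcases List.mem_cons.1 ((hmem v).2 hvS) with rfl | h
      · exact absurd rfl hva
      · exact h
  · intro i h h2
    have h' : i + 1 < (a :: t).length := by simpa using Nat.succ_lt_succ h
    have h2' : i + 1 < (a :: t).length - 1 := by
      simp only [List.length_cons]; omega
    have := hdoml (i+1) h' h2'
    simpa using this

lemma goodList_head_dom {G : SimpleGraph V} {a : V} {t : List V} {S : Set V}
    (hl : GoodList G (a :: t) S) (ht : t ≠ []) : ∃ π, DominatedIn G S a π := by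
  obtain ⟨hnd, hmem, hdoml⟩ := hl
  have h0 : 0 < (a :: t).length := by simp
  have h02 : 0 < (a :: t).length - 1 := by
    simp only [List.length_cons]
    have := List.length_pos_iff.2 ht
    omega
  have := hdoml 0 h0 h02
  have hset : {w | w ∈ (a :: t).drop 0} = S := by
    ext w
    simpa using (hmem w)
  rw [show ((a :: t)[0]'h0) = a from rfl, hset] at this
  exact this

/-- auxiliary step relation for acyclicity bookkeeping -/
def RelP (σ : V) (P : V → Finset (Sym2 V)) (y x : V) : Prop :=
  x ∈ PiStar P y ∧ y ≠ σ ∧ x ≠ σ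

structure InvP (G : SimpleGraph V) (σ : V) (Q : Finset V) (P : V → Finset (Sym2 V)) : Prop where
  conv : ∀ ρ ∈ Q, ρ ≠ σ → ∀ p ∈ P ρ, ∃ v ∈ p, v ∈ Q
  expo : ∀ T : Finset V, T ⊆ Q → (∃ ρ ∈ T, ρ ≠ σ) →
    ∃ ρ ∈ T, ρ ≠ σ ∧ ∃ p ∈ P ρ, ∀ π ∈ p,
      ∀ w ∈ T, w ∈ closedNbhd G ρ → w ∈ closedNbhd G π
  acyc : ∀ x, ¬ Relation.TransGen (RelP σ P) x x

lemma invP_dismantle (G : SimpleGraph V) (σ : V) [DecidableEq V] :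
    ∀ (n : ℕ) (Q : Finset V) (P : V → Finset (Sym2 V)), Q.card = n →
      InvP G σ Q P → ∃ l, GoodList G l (↑Q : Set V) := by
  intro n
  induction n using Nat.strong_induction_on with
  | _ n IH =>
    intro Q P hcard hInv
    by_cases hQ : ∃ ρ ∈ Q, ρ ≠ σ
    · -- main step
      obtain ⟨ρ, hρQ, hρσ, p, hpP, hdom⟩ := hInv.expo Q le_rfl hQ
      obtain ⟨π, hπp, hπQ⟩ := hInv.conv ρ hρQ hρσ p hpP
      have hπρ : π ≠ ρ := by
        rintro rfl
        exact hInv.acyc π (Relation.TransGen.single ⟨⟨p, hpP, hπp⟩, hρσ, hρσ⟩)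
      -- the rerouting map
      set g : V → V := fun x => if x = ρ then π else x with hg
      set P' : V → Finset (Sym2 V) := fun μ => (P μ).image (Sym2.map g) with hP'
      set Q' : Finset V := Q.erase ρ with hQ'
      have hmemQ' : ∀ x, x ∈ Q' ↔ x ∈ Q ∧ x ≠ ρ := by
        intro x; rw [hQ', Finset.mem_erase]; tauto
      have hgmem : ∀ x, x ∈ Q → g x ∈ Q' := by
        intro x hx
        by_cases hxρ : x = ρ
        · subst hxρ; simp only [hg, if_pos rfl]
          exact (hmemQ' π).2 ⟨hπQ, hπρ⟩
        · simp only [hg, if_neg hxρ]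
          exact (hmemQ' x).2 ⟨hx, hxρ⟩
      have hstep : ∀ y x, RelP σ P' y x → Relation.TransGen (RelP σ P) y x := by
        rintro y x ⟨⟨p', hp', hxp'⟩, hyσ, hxσ⟩
        rw [hP'] at hp'
        simp only [Finset.mem_image] at hp'
        obtain ⟨p₀, hp₀, rfl⟩ := hp'
        rw [Sym2.mem_map] at hxp'
        obtain ⟨v₀, hv₀, rfl⟩ := hxp'
        by_cases hv : v₀ = ρ
        · have h1 : RelP σ P y ρ := ⟨⟨p₀, hp₀, hv ▸ hv₀⟩, hyσ, hρσ⟩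
          have h2 : RelP σ P ρ (g v₀) := by
            refine ⟨⟨p, hpP, ?_⟩, hρσ, hxσ⟩
            simp only [hg, if_pos hv]
            exact hπp
          exact Relation.TransGen.tail (Relation.TransGen.single h1) h2
        · refine Relation.TransGen.single ?_
          have hgv : g v₀ = v₀ := by simp [hg, hv]
          rw [hgv]
          rw [hgv] at hxσ
          exact ⟨⟨p₀, hp₀, hv₀⟩, hyσ, hxσ⟩
      have hInv' : InvP G σ Q' P' := by
        refine ⟨?_, ?_, ?_⟩
        · intro μ hμ hμσ p' hp'
          rw [hP'] at hp'
          simp only [Finset.mem_image] at hp'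
          obtain ⟨p₀, hp₀, rfl⟩ := hp'
          obtain ⟨v, hvp, hvQ⟩ := hInv.conv μ ((hmemQ' μ).1 hμ).1 hμσ p₀ hp₀
          exact ⟨g v, Sym2.mem_map.2 ⟨v, hvp, rfl⟩, hgmem v hvQ⟩
        · intro T hTQ' hT
          have hTQ : T ⊆ Q := hTQ'.trans (Finset.erase_subset ρ Q)
          obtain ⟨μ, hμT, hμσ, p₀, hp₀, hdom₀⟩ := hInv.expo T hTQ hT
          refine ⟨μ, hμT, hμσ, Sym2.map g p₀, ?_, ?_⟩
          · rw [hP']; exact Finset.mem_image_of_mem _ hp₀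
          · intro π' hπ' w hwT hw
            rw [Sym2.mem_map] at hπ'
            obtain ⟨v₀, hv₀, rfl⟩ := hπ'
            by_cases hv : v₀ = ρ
            · have hwρ : w ∈ closedNbhd G ρ := hdom₀ ρ (hv ▸ hv₀) w hwT hw
              have : g v₀ = π := by simp [hg, hv]
              rw [this]
              exact hdom π hπp w (hTQ hwT) hwρ
            · have : g v₀ = v₀ := by simp [hg, hv]
              rw [this]
              exact hdom₀ v₀ hv₀ w hwT hw
        · intro x hx
          have : Relation.TransGen (Relation.TransGen (RelP σ P)) x x :=
            Relation.TransGen.mono hstep x x hx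
          rw [Relation.transGen_idem] at this
          exact hInv.acyc x this
      have hρQ' : ρ ∉ Q' := fun h => ((hmemQ' ρ).1 h).2 rfl
      have hcard' : Q'.card < n := by
        rw [hQ', ← hcard]
        exact Finset.card_erase_lt_of_mem hρQ
      obtain ⟨l', hl'⟩ := IH Q'.card hcard' Q' P' rfl hInv'
      refine ⟨ρ :: l', ?_⟩
      have hins : insert ρ (↑Q' : Set V) = (↑Q : Set V) := by
        ext x
        simp only [Set.mem_insert_iff, Finset.coe_insert, Finset.mem_coe, hmemQ' x]
        constructor
        · rintro (rfl | ⟨h, _⟩) <;> assumption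
        · intro hx
          by_cases hxρ : x = ρ
          · exact Or.inl hxρ
          · exact Or.inr ⟨hx, hxρ⟩
      rw [← hins]
      refine goodList_cons hl' (by simpa using hρQ') ?_
      refine ⟨π, ?_, hπρ, ?_⟩
      · rw [hins]; exact hπQ
      · intro w hw hwρ
        rw [hins] at hw
        exact hdom π hπp w hw hwρ
    · -- Q ⊆ {σ}
      push_neg at hQ
      by_cases hσ : σ ∈ Q
      · have : Q = {σ} := by
          apply Finset.eq_singleton_iff_unique_mem.2
          exact ⟨hσ, fun x hx => hQ x hx⟩
        refine ⟨[σ], ?_⟩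
        rw [this]
        simpa using goodList_singleton G σ
      · have : Q = ∅ := by
          apply Finset.eq_empty_of_forall_notMem
          intro x hx
          exact hσ (hQ x hx ▸ hx)
        refine ⟨[], ?_⟩
        rw [this]
        simpa using goodList_nil G

lemma transGen_cycle_to_zmod {σ : V} {Pr : V → Finset (Sym2 V)}
    (hacyc : ¬ ∃ m : ℕ, 0 < m ∧ ∃ f : ZMod m → V,
      ∀ i, f i ≠ σ ∧ f (i + 1) ∈ PiStar Pr (f i)) :
    ∀ x, ¬ Relation.TransGen (RelP σ Pr) x x := by
  intro x hx
  rw [Relation.TransGen.head'_iff] at hx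
  obtain ⟨y, hxy, hyx⟩ := hx
  obtain ⟨l, hchain, hlast⟩ := List.exists_isChain_cons_of_relationReflTransGen hyx
  set c : List V := x :: y :: l with hc
  have hcc : List.IsChain (RelP σ Pr) c := List.IsChain.cons_cons hxy hchain
  set m : ℕ := l.length + 1 with hm
  have hclen : c.length = m + 1 := by simp [hc, hm]
  haveI : NeZero m := ⟨Nat.succ_ne_zero _⟩
  have hstep : ∀ j, j < m → RelP σ Pr (c.getD j x) (c.getD (j + 1) x) := by
    intro j hj
    have h1 := List.isChain_iff_getElem.1 hcc j (by omega)
    rw [List.getD_eq_getElem c x (by omega), List.getD_eq_getElem c x (by omega)]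
    simpa using h1
  have hlastD : c.getD m x = x := by
    have h2 : c.getD m x = (y :: l).getD l.length x := List.getD_cons_succ ..
    have h3 : (y :: l).getD l.length x = (y :: l).getLast (List.cons_ne_nil _ _) := by
      rw [List.getD_eq_getElem _ x (by simp), List.getLast_eq_getElem]
      simp
    rw [h2, h3]
    exact hlast
  refine hacyc ⟨m, Nat.succ_pos _, fun i => c.getD i.val x, ?_⟩
  intro i
  have hiv : i.val < m := ZMod.val_lt i
  have hadd : (i + 1 : ZMod m).val = (i.val + 1) % m := by
    rw [ZMod.val_add, ZMod.val_one_eq_one_mod]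
    conv_rhs => rw [Nat.add_mod]
    rw [Nat.mod_eq_of_lt hiv]
  have hs := hstep i.val hiv
  have hkey : c.getD (i + 1 : ZMod m).val x = c.getD (i.val + 1) x := by
    by_cases hend : i.val + 1 = m
    · rw [hadd, hend, Nat.mod_self, hlastD]
      rfl
    · rw [hadd, Nat.mod_eq_of_lt (by omega)]
  refine ⟨hs.2.1, ?_⟩
  show c.getD (i + 1 : ZMod m).val x ∈ PiStar Pr (c.getD i.val x)
  rw [hkey]
  exact hs.1

lemma self_mem_closedNbhd {G : SimpleGraph V} {u : V} : u ∈ closedNbhd G u :=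
  mem_closedNbhd.2 (Or.inl rfl)

lemma twin_swap [DecidableEq V] {G : SimpleGraph V} {S : Set V} {a b : V} (ha : a ∈ S)
    (hb : b ∈ S)
    (hab : a ≠ b) (htwin : ∀ w ∈ S, w ∈ closedNbhd G a ↔ w ∈ closedNbhd G b) :
    DismantlableOn G (S \ {a}) → DismantlableOn G (S \ {b}) := by
  rintro ⟨l, hnd, hmem, hdom⟩
  have hsymtwin : ∀ w ∈ S, a ∈ closedNbhd G w ↔ b ∈ closedNbhd G w := by
    intro w hw
    constructor
    · intro h; exact closedNbhd_comm.1 ((htwin w hw).1 (closedNbhd_comm.1 h))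
    · intro h; exact closedNbhd_comm.1 ((htwin w hw).2 (closedNbhd_comm.1 h))
  set f : V → V := fun x => if x = b then a else x with hf
  have hfeq : ∀ x, x ≠ b → f x = x := fun x hx => if_neg hx
  have hfb : f b = a := if_pos rfl
  have hP : ∀ u ∈ S, ∀ v ∈ S, (f v ∈ closedNbhd G (f u) ↔ v ∈ closedNbhd G u) := by
    intro u hu v hv
    by_cases hub : u = b <;> by_cases hvb : v = b
    · subst hub; subst hvb
      rw [hfb]
      exact iff_of_true self_mem_closedNbhd self_mem_closedNbhd
    · subst hub
      rw [hfb, hfeq v hvb]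
      exact htwin v hv
    · subst hvb
      rw [hfb, hfeq u hub]
      exact hsymtwin u hu
    · rw [hfeq u hub, hfeq v hvb]
  have hmemS : ∀ x ∈ l, x ∈ S ∧ x ≠ a := by
    intro x hx
    have := (hmem x).1 hx
    exact ⟨this.1, this.2⟩
  have hinj : ∀ x ∈ l, ∀ y ∈ l, f x = f y → x = y := by
    intro x hx y hy hxy
    by_cases hxb : x = b <;> by_cases hyb : y = b
    · rw [hxb, hyb]
    · rw [hfeq y hyb, hxb, hfb] at hxy
      exact absurd hxy.symm (hmemS y hy).2
    · rw [hfeq x hxb, hyb, hfb] at hxy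
      exact absurd hxy (hmemS x hx).2
    · rwa [hfeq x hxb, hfeq y hyb] at hxy
  refine ⟨l.map f, ?_, ?_, ?_⟩
  · exact List.Nodup.map_on hinj hnd
  · intro v
    simp only [List.mem_map]
    constructor
    · rintro ⟨w, hwl, rfl⟩
      obtain ⟨hwS, hwa⟩ := hmemS w hwl
      by_cases hwb : w = b
      · subst hwb
        rw [hfb]
        exact ⟨ha, fun h => hab h⟩
      · rw [hfeq w hwb]
        exact ⟨hwS, hwb⟩
    · rintro ⟨hvS, hvb⟩
      by_cases hva : v = a
      · subst hva
        exact ⟨b, (hmem b).2 ⟨hb, fun h => hab h.symm⟩, hfb⟩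
      · exact ⟨v, (hmem v).2 ⟨hvS, hva⟩, hfeq v hvb⟩
  · intro i h h2
    simp only [List.length_map] at h h2
    obtain ⟨π, hπmem, hπne, hπdom⟩ := hdom i h h2
    have hgeti : (l.map f)[i]'(by simpa using h) = f (l[i]'h) := List.getElem_map f
    have hdropmap : (l.map f).drop i = (l.drop i).map f := (List.map_drop (f := f) (l := l) (i := i)).symm
    have hliS : l[i]'h ∈ S := (hmemS _ (List.getElem_mem h)).1
    have hπl : π ∈ l.drop i := hπmem
    have hπS : π ∈ S := (hmemS _ (List.mem_of_mem_drop hπl)).1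
    refine ⟨f π, ?_, ?_, ?_⟩
    · show f π ∈ {w | w ∈ (l.map f).drop i}
      rw [hdropmap]
      exact List.mem_map_of_mem hπl
    · rw [hgeti]
      intro hfeq2
      exact hπne (hinj π (List.mem_of_mem_drop hπl) _ (List.getElem_mem h) hfeq2)
    · intro w hw hwn
      rw [hdropmap] at hw
      simp only [Set.mem_setOf_eq, List.mem_map] at hw
      obtain ⟨w₀, hw₀, rfl⟩ := hw
      have hw₀S : w₀ ∈ S := (hmemS _ (List.mem_of_mem_drop hw₀)).1
      rw [hgeti] at hwn
      have hw₀n : w₀ ∈ closedNbhd G (l[i]'h) := (hP _ hliS _ hw₀S).1 hwn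
      have := hπdom w₀ hw₀ hw₀n
      exact (hP _ hπS _ hw₀S).2 this

lemma dominatedIn_of_goodList {G : SimpleGraph V} {l : List V} {S : Set V}
    (h : GoodList G l S) : DismantlableOn G S := ⟨l, h⟩

lemma removal [DecidableEq V] {G : SimpleGraph V} :
    ∀ (n : ℕ) (l : List V) (S : Set V), l.length = n → GoodList G l S →
      ∀ u v, u ∈ S → v ∈ S → v ≠ u → leD G S u v → DismantlableOn G (S \ {u}) := by
  intro n
  induction n using Nat.strong_induction_on with
  | _ n IH =>
    intro l S hlen hgl u v huS hvS hvu hle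
    match l, hlen with
    | [], hlen =>
      exact absurd ((hgl.2.1 u).2 huS) (List.not_mem_nil (a := u))
    | [a], hlen =>
      have hUa : u = a := by
        have := (hgl.2.1 u).2 huS; simpa using this
      have hVa : v = a := by
        have := (hgl.2.1 v).2 hvS; simpa using this
      exact absurd (hVa.trans hUa.symm) hvu
    | a :: b :: t, hlen =>
      set t' : List V := b :: t with ht'
      have htne : t' ≠ [] := by simp [ht']
      have htail : GoodList G t' (S \ {a}) := goodList_tail hgl
      obtain ⟨π₁, hπ₁S, hπ₁a, hπ₁dom⟩ := goodList_head_dom hgl htne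
      have haS : a ∈ S := (hgl.2.1 a).1 (by simp)
      by_cases hua : u = a
      · subst hua
        exact dominatedIn_of_goodList htail
      · -- u ≠ a
        have huS' : u ∈ S \ {a} := ⟨huS, hua⟩
        by_cases htw : π₁ = u ∧ v = a
        · -- twin case: N[a] ∩ S ⊆ N[u] and N[u] ∩ S ⊆ N[a]
          obtain ⟨hπu, hva⟩ := htw
          have h1 : leD G S a u := hπu ▸ hπ₁dom
          have h2 : leD G S u a := hva ▸ hle
          refine twin_swap haS huS (fun h => hua h.symm) ?_ (dominatedIn_of_goodList htail)
          intro w hw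
          exact ⟨fun hn => h1 w hw hn, fun hn => h2 w hw hn⟩
        · -- non-twin case: find π' dominating a with π' ∉ {u, a}
          have hπ' : ∃ π', π' ∈ S ∧ π' ≠ u ∧ π' ≠ a ∧ leD G S a π' := by
            by_cases hπu : π₁ = u
            · -- then v ≠ a
              have hva : v ≠ a := fun h => htw ⟨hπu, h⟩
              refine ⟨v, hvS, hvu, hva, ?_⟩
              exact (hπu ▸ hπ₁dom : leD G S a u).trans hle
            · exact ⟨π₁, hπ₁S, hπu, hπ₁a, hπ₁dom⟩
          obtain ⟨π', hπ'S, hπ'u, hπ'a, hπ'dom⟩ := hπ'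
          -- dominator of u inside S \ {a}
          have hv' : ∃ v', v' ∈ S \ {a} ∧ v' ≠ u ∧ leD G (S \ {a}) u v' := by
            by_cases hva : v = a
            · refine ⟨π', ⟨hπ'S, hπ'a⟩, hπ'u, ?_⟩
              exact ((hva ▸ hle : leD G S u a).trans hπ'dom).mono Set.diff_subset
            · exact ⟨v, ⟨hvS, hva⟩, hvu, hle.mono Set.diff_subset⟩
          obtain ⟨v', hv'S, hv'u, hv'dom⟩ := hv'
          have hrec := IH t'.length (by simp [← hlen, ht']) t' (S \ {a}) rfl htail
            u v' huS' hv'S hv'u hv'dom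
          obtain ⟨t'', ht''⟩ := hrec
          have hins : insert a ((S \ {a}) \ {u}) = S \ {u} := by
            ext w
            simp only [Set.mem_insert_iff, Set.mem_diff, Set.mem_singleton_iff]
            constructor
            · rintro (rfl | ⟨⟨h1, h2⟩, h3⟩)
              · exact ⟨haS, fun h => hua h.symm⟩
              · exact ⟨h1, h3⟩
            · rintro ⟨h1, h2⟩
              by_cases hwa : w = a
              · exact Or.inl hwa
              · exact Or.inr ⟨⟨h1, hwa⟩, h2⟩
          refine ⟨a :: t'', ?_⟩
          rw [← hins]
          refine goodList_cons ht'' (fun h => h.1.2 rfl) ?_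
          refine ⟨π', ?_, hπ'a, ?_⟩
          · rw [hins]; exact ⟨hπ'S, hπ'u⟩
          · intro w hw hwn
            rw [hins] at hw
            exact hπ'dom w hw.1 hwn

lemma clique_of_no_strict {G : SimpleGraph V} :
    ∀ (n : ℕ) (l : List V) (S : Set V), l.length = n → GoodList G l S →
      (∀ u ∈ S, ∀ v ∈ S, v ≠ u → leD G S u v → leD G S v u) → G.IsClique S := by
  intro n
  induction n using Nat.strong_induction_on with
  | _ n IH =>
    intro l S hlen hgl hnostrict
    match l, hlen with
    | [], hlen =>
      have hS : S = ∅ := by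
        ext w; simpa using (hgl.2.1 w).symm
      rw [hS]
      simp [SimpleGraph.isClique_iff, Set.pairwise_empty]
    | [a], hlen =>
      have hS : S = {a} := by
        ext w; simpa using (hgl.2.1 w).symm
      rw [hS, SimpleGraph.isClique_iff]
      exact Set.pairwise_singleton a G.Adj
    | a :: b :: t, hlen =>
      set t' : List V := b :: t with ht'
      have htne : t' ≠ [] := by simp [ht']
      have htail : GoodList G t' (S \ {a}) := goodList_tail hgl
      obtain ⟨π₁, hπ₁S, hπ₁a, hπ₁dom⟩ := goodList_head_dom hgl htne
      have haS : a ∈ S := (hgl.2.1 a).1 (by simp)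
      have htwinrev : leD G S π₁ a := hnostrict a haS π₁ hπ₁S hπ₁a hπ₁dom
      have hnostrict' : ∀ u ∈ S \ {a}, ∀ v ∈ S \ {a}, v ≠ u →
          leD G (S \ {a}) u v → leD G (S \ {a}) v u := by
        intro u huS v hvS hvu hle
        have hleS : leD G S u v := by
          intro w hwS hwn
          by_cases hwa : w = a
          · rw [hwa] at hwn ⊢
            have hu : u ∈ closedNbhd G a := closedNbhd_comm.1 hwn
            have hu2 : u ∈ closedNbhd G π₁ := hπ₁dom u huS.1 hu
            have hπu : π₁ ∈ closedNbhd G u := closedNbhd_comm.1 hu2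
            have hπv : π₁ ∈ closedNbhd G v := hle π₁ ⟨hπ₁S, hπ₁a⟩ hπu
            have hv : v ∈ closedNbhd G π₁ := closedNbhd_comm.1 hπv
            have hva : v ∈ closedNbhd G a := htwinrev v hvS.1 hv
            exact closedNbhd_comm.1 hva
          · exact hle w ⟨hwS, hwa⟩ hwn
        exact (hnostrict u huS.1 v hvS.1 hvu hleS).mono Set.diff_subset
      have hclique' : G.IsClique (S \ {a}) :=
        IH t'.length (by simp [← hlen, ht']) t' (S \ {a}) rfl htail hnostrict'
      rw [SimpleGraph.isClique_iff]
      intro x hx y hy hxy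
      have hkey : ∀ z ∈ S, z ≠ a → G.Adj a z := by
        intro z hzS hza
        have hz : z ∈ closedNbhd G π₁ := by
          by_cases hzπ : z = π₁
          · rw [hzπ]; exact self_mem_closedNbhd
          · have := hclique' ⟨hzS, hza⟩ ⟨hπ₁S, hπ₁a⟩ hzπ
            exact closedNbhd_comm.1 (mem_closedNbhd.2 (Or.inr this))
        have hza' : z ∈ closedNbhd G a := htwinrev z hzS hz
        rcases mem_closedNbhd.1 hza' with h | h
        · exact absurd h hza
        · exact h
      by_cases hxa : x = a
      · subst hxa
        exact hkey y hy (fun h => hxy h.symm)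
      · by_cases hya : y = a
        · subst hya
          exact (hkey x hx hxa).symm
        · exact hclique' ⟨hx, hxa⟩ ⟨hy, hya⟩ hxy

lemma exists_maximal_leD {G : SimpleGraph V} {S : Set V} (hfin : S.Finite) {u : V}
    (huS : u ∈ S) :
    ∃ w ∈ S, leD G S u w ∧ ∀ z ∈ S, leD G S w z → leD G S z w := by
  classical
  set μ : V → ℕ := fun w => (hfin.toFinset.filter (· ∈ closedNbhd G w)).card with hμ
  have hs : (hfin.toFinset.filter (fun w => leD G S u w)).Nonempty := by
    refine ⟨u, ?_⟩
    rw [Finset.mem_filter, Set.Finite.mem_toFinset]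
    exact ⟨huS, fun w hw hn => hn⟩
  obtain ⟨w, hwmem, hwmax⟩ := Finset.exists_max_image _ μ hs
  rw [Finset.mem_filter, Set.Finite.mem_toFinset] at hwmem
  obtain ⟨hwS, huw⟩ := hwmem
  refine ⟨w, hwS, huw, ?_⟩
  intro z hzS hwz
  have hzmem : z ∈ hfin.toFinset.filter (fun w => leD G S u w) := by
    rw [Finset.mem_filter, Set.Finite.mem_toFinset]
    exact ⟨hzS, huw.trans hwz⟩
  have hcard : μ z ≤ μ w := hwmax z hzmem
  have hsub : hfin.toFinset.filter (· ∈ closedNbhd G w) ⊆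
      hfin.toFinset.filter (· ∈ closedNbhd G z) := by
    intro x hx
    rw [Finset.mem_filter, Set.Finite.mem_toFinset] at hx ⊢
    exact ⟨hx.1, hwz x hx.1 hx.2⟩
  have heq : hfin.toFinset.filter (· ∈ closedNbhd G w) =
      hfin.toFinset.filter (· ∈ closedNbhd G z) :=
    Finset.eq_of_subset_of_card_le hsub hcard
  intro x hxS hxz
  have : x ∈ hfin.toFinset.filter (· ∈ closedNbhd G z) := by
    rw [Finset.mem_filter, Set.Finite.mem_toFinset]
    exact ⟨hxS, hxz⟩
  rw [← heq, Finset.mem_filter] at this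
  exact this.2

section Equivariant

variable {H : Type*} [Group H] [MulAction H V] {G : SimpleGraph V}

lemma mem_closedNbhd_smul (hact : ∀ (h : H) (u v : V), G.Adj (h • u) (h • v) ↔ G.Adj u v)
    (h : H) {u w : V} : (h • w) ∈ closedNbhd G (h • u) ↔ w ∈ closedNbhd G u := by
  rw [mem_closedNbhd, mem_closedNbhd, hact h u w]
  constructor
  · rintro (heq | hadj)
    · exact Or.inl (smul_left_cancel h heq)
    · exact Or.inr hadj
  · rintro (rfl | hadj)
    · exact Or.inl rfl
    · exact Or.inr hadj

lemma leD_smul (hact : ∀ (h : H) (u v : V), G.Adj (h • u) (h • v) ↔ G.Adj u v)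
    {S : Set V} (hSinv : ∀ (h : H), ∀ x ∈ S, h • x ∈ S) (h : H) {u v : V}
    (hle : leD G S u v) : leD G S (h • u) (h • v) := by
  intro w hwS hwn
  have hw : w = h • (h⁻¹ • w) := (smul_inv_smul h w).symm
  rw [hw] at hwn ⊢
  rw [mem_closedNbhd_smul hact] at hwn ⊢
  exact hle _ (by simpa using hSinv h⁻¹ w hwS) hwn

lemma invariant_clique_of_dismantlable [DecidableEq V]
    (hact : ∀ (h : H) (u v : V), G.Adj (h • u) (h • v) ↔ G.Adj u v) :
    ∀ (n : ℕ) (S : Set V), S.ncard = n → S.Finite → S.Nonempty →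
      (∀ (h : H), ∀ x ∈ S, h • x ∈ S) → DismantlableOn G S →
      ∃ Δ : Set V, Δ.Nonempty ∧ G.IsClique Δ ∧ ∀ h : H, (fun v => h • v) '' Δ = Δ := by
  intro n
  induction n using Nat.strong_induction_on with
  | _ n IH =>
    intro S hDavid hfin hne hinv hdis
    set D : Set V := {u | u ∈ S ∧ ∃ v ∈ S, v ≠ u ∧ leD G S u v ∧ ¬ leD G S v u} with hD
    by_cases hDne : D = ∅
    · -- no strictly dominated vertices : S is a clique
      refine ⟨S, hne, ?_, ?_⟩
      · obtain ⟨l, hl⟩ := hdis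
        refine clique_of_no_strict l.length l S rfl hl ?_
        intro u huS v hvS hvu hle
        by_contra hcon
        have : u ∈ D := ⟨huS, v, hvS, hvu, hle, hcon⟩
        rw [hDne] at this
        exact this
      · intro h
        ext x
        constructor
        · rintro ⟨y, hy, rfl⟩
          exact hinv h y hy
        · intro hx
          exact ⟨h⁻¹ • x, hinv h⁻¹ x hx, smul_inv_smul h x⟩
    · -- remove all strictly dominated vertices
      have hDS : D ⊆ S := fun u hu => hu.1
      have hmax : ∀ u ∈ S, ∃ w, w ∈ S ∧ w ∉ D ∧ leD G S u w ∧ (u ∈ D → w ≠ u) := by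
        intro u huS
        obtain ⟨w, hwS, huw, hwmax⟩ := exists_maximal_leD hfin huS
        refine ⟨w, hwS, ?_, huw, ?_⟩
        · rintro ⟨_, v, hvS, hvw, hle, hnle⟩
          exact hnle (hwmax v hvS hle)
        · rintro ⟨_, v, hvS, hvu, hle, hnle⟩ rfl
          exact hnle (hwmax v hvS hle)
      set M : Set V := S \ D with hM
      have hMne : M.Nonempty := by
        obtain ⟨u, huS⟩ := hne
        obtain ⟨w, hwS, hwD, _, _⟩ := hmax u huS
        exact ⟨w, hwS, hwD⟩
      have hDinv : ∀ (h : H), ∀ x ∈ D, h • x ∈ D := by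
        rintro h x ⟨hxS, v, hvS, hvx, hle, hnle⟩
        refine ⟨hinv h x hxS, h • v, hinv h v hvS, ?_, leD_smul hact hinv h hle, ?_⟩
        · intro heq; exact hvx (smul_left_cancel h heq)
        · intro hcon
          apply hnle
          have := leD_smul hact hinv h⁻¹ hcon
          simpa using this
      have hMinv : ∀ (h : H), ∀ x ∈ M, h • x ∈ M := by
        rintro h x ⟨hxS, hxD⟩
        refine ⟨hinv h x hxS, fun hcon => hxD ?_⟩
        have := hDinv h⁻¹ _ hcon
        simpa using this
      have hDfin : D.Finite := hfin.subset hDS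
      -- remove the elements of D one at a time
      have hremove : ∀ E : Finset V, ↑E ⊆ D → DismantlableOn G (S \ ↑E) := by
        intro E
        induction E using Finset.induction_on with
        | empty => intro _; simpa using hdis
        | @insert u E huE IHE =>
          intro hsub
          have hED : ↑E ⊆ D := by
            intro x hx
            exact hsub (by simp [hx])
          have huD : u ∈ D := hsub (by simp)
          obtain ⟨w, hwS, hwD, huw, hwu⟩ := hmax u (hDS huD)
          have hwu' : w ≠ u := hwu huD
          obtain ⟨l, hl⟩ := IHE hED
          have hres := removal l.length l (S \ ↑E) rfl hl u w
            ⟨hDS huD, fun hc => huE hc⟩ ⟨hwS, fun hc => hwD (hED hc)⟩ hwu'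
            (huw.mono Set.diff_subset)
          have hseteq : (S \ ↑E) \ {u} = S \ ↑(insert u E) := by
            ext x
            simp only [Set.mem_diff, Finset.coe_insert, Set.mem_insert_iff,
              Set.mem_singleton_iff, Finset.mem_coe]
            tauto
          rwa [hseteq] at hres
      have hMdis : DismantlableOn G M := by
        have := hremove hDfin.toFinset (by simp)
        rwa [Set.Finite.coe_toFinset] at this
      have hMS : M ⊂ S := by
        refine ⟨Set.diff_subset, ?_⟩
        intro hcon
        obtain ⟨u, huD⟩ := Set.nonempty_iff_ne_empty.2 hDne
        exact (hcon (hDS huD)).2 huD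
      have hlt : M.ncard < n := by
        rw [← hDavid]
        exact Set.ncard_lt_ncard hMS hfin
      exact IH M.ncard hlt M rfl (hfin.subset hMS.1) hMne hMinv hMdis

end Equivariant


/-- Let `H` be a group acting on `Γ` by automorphisms, `σ` a vertex and
`R` a nonempty finite set such that for every `σ'` in the orbit `S = Hσ` there is a
`σ'`-projection `Π_{σ'}` for which `R` is `Π_{σ'}`-convex, the family `{Π_{σ'}}` is
`H`-equivariant, and the orbit set `HR` is finite. Then the subgraph induced on `HR` is
dismantlable and `Γ` contains an `H`-invariant clique. -/
theorem invariant_clique_of_equivariant_family {V : Type*} [DecidableEq V] {H : Type*}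
    [Group H] [MulAction H V]
    (G : SimpleGraph V) (hact : ∀ (h : H) (u v : V), G.Adj (h • u) (h • v) ↔ G.Adj u v)
    (σ : V) (R : Set V) (hfin : R.Finite) (hne : R.Nonempty)
    (Pr : V → V → Finset (Sym2 V))
    (hproj : ∀ σ' ∈ MulAction.orbit H σ, IsSigmaProjection G σ' (Pr σ'))
    (hconv : ∀ σ' ∈ MulAction.orbit H σ, PiConvex σ' (Pr σ') R)
    (horbfin : (orbitSet H R).Finite)
    (hequiv : ∀ (h : H), ∀ σ' ∈ MulAction.orbit H σ, ∀ ρ, ρ ≠ σ' →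
      (Pr σ' ρ).image (Sym2.map (fun v => h • v)) = Pr (h • σ') (h • ρ)) :
    DismantlableOn G (orbitSet H R) ∧
      ∃ Δ : Set V, Δ.Nonempty ∧ G.IsClique Δ ∧ ∀ h : H, (fun v => h • v) '' Δ = Δ := by
  classical
  set W : Set V := orbitSet H R with hW
  have hσorb : σ ∈ MulAction.orbit H σ := MulAction.mem_orbit_self σ
  have hWne : W.Nonempty := by
    obtain ⟨ρ₀, hρ₀⟩ := hne
    exact ⟨ρ₀, 1, ρ₀, hρ₀, (one_smul H ρ₀).symm⟩
  have hWinv : ∀ (h : H), ∀ x ∈ W, h • x ∈ W := by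
    rintro h x ⟨g, ρ₀, hρ₀, rfl⟩
    exact ⟨h * g, ρ₀, hρ₀, (mul_smul h g ρ₀).symm⟩
  set Q₀ : Finset V := horbfin.toFinset with hQ₀
  have hQ₀W : (↑Q₀ : Set V) = W := Set.Finite.coe_toFinset horbfin
  have hmemQ₀ : ∀ x, x ∈ Q₀ ↔ x ∈ W := fun x => Set.Finite.mem_toFinset horbfin
  have hInv : InvP G σ Q₀ (Pr σ) := by
    refine ⟨?_, ?_, ?_⟩
    · -- convexity of the orbit set
      intro ρ hρQ hρσ p hp
      obtain ⟨g, ρ₀, hρ₀R, hx⟩ := (hmemQ₀ ρ).1 hρQ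
      have hσ' : g⁻¹ • σ ∈ MulAction.orbit H σ := MulAction.mem_orbit σ g⁻¹
      have hρ₀ne : ρ₀ ≠ g⁻¹ • σ := by
        intro hceq
        apply hρσ
        rw [hx, hceq, smul_inv_smul]
      have heq := hequiv g (g⁻¹ • σ) hσ' ρ₀ hρ₀ne
      rw [smul_inv_smul] at heq
      rw [hx, ← heq] at hp
      rw [Finset.mem_image] at hp
      obtain ⟨q, hq, rfl⟩ := hp
      obtain ⟨v, hvq, hvR⟩ := hconv (g⁻¹ • σ) hσ' ρ₀ hρ₀R hρ₀ne q hq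
      refine ⟨g • v, Sym2.mem_map.2 ⟨v, hvq, rfl⟩, ?_⟩
      exact (hmemQ₀ (g • v)).2 ⟨g, v, hvR, rfl⟩
    · -- exposedness
      intro T _ hT
      exact (hproj σ hσorb).exposed T hT
    · -- acyclicity
      exact transGen_cycle_to_zmod (hproj σ hσorb).acyclic
  obtain ⟨l, hl⟩ := invP_dismantle G σ Q₀.card Q₀ (Pr σ) rfl hInv
  rw [hQ₀W] at hl
  have hdis : DismantlableOn G W := ⟨l, hl⟩
  refine ⟨hdis, ?_⟩
  exact invariant_clique_of_dismantlable hact W.ncard W rfl horbfin hWne hWinv hdis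
end

section
/- Let H be a group of automorphisms of a graph Γ with vertex set V, let σ ∈ V, and let R ⊆ V. Suppose that for every σ' in the orbit S = Hσ there is a σ'-projection Π_{σ'} for which R is Π_{σ'}-convex, and that the family {Π_{σ'}}_{σ'∈S} is H-equivariant. Then the set T = HR = {hρ : h ∈ H, ρ ∈ R} is Π_σ-convex. -/
open SimpleGraph

variable {V : Type*}

/-- Let `H` be a group acting on `Γ` by automorphisms, `σ` a vertex and
`R` a set of vertices such that for every `σ'` in the orbit `S = Hσ` there is a
`σ'`-projection `Π_{σ'}` for which `R` is `Π_{σ'}`-convex, and the family `{Π_{σ'}}` is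
`H`-equivariant. Then the orbit set `T = HR` is `Π_σ`-convex. -/
theorem orbitSet_piConvex {V : Type*} [DecidableEq V] {H : Type*} [Group H] [MulAction H V]
    (G : SimpleGraph V) (hact : ∀ (h : H) (u v : V), G.Adj (h • u) (h • v) ↔ G.Adj u v)
    (σ : V) (R : Set V)
    (Pr : V → V → Finset (Sym2 V))
    (hproj : ∀ σ' ∈ MulAction.orbit H σ, IsSigmaProjection G σ' (Pr σ'))
    (hconv : ∀ σ' ∈ MulAction.orbit H σ, PiConvex σ' (Pr σ') R)
    (hequiv : ∀ (h : H), ∀ σ' ∈ MulAction.orbit H σ, ∀ ρ, ρ ≠ σ' →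
      (Pr σ' ρ).image (Sym2.map (fun v => h • v)) = Pr (h • σ') (h • ρ)) :
    PiConvex σ (Pr σ) (orbitSet H R) := by
  rintro ρ ⟨h, ρ₀, hρ₀R, rfl⟩ hne p hp
  have hσ' : (h⁻¹ • σ) ∈ MulAction.orbit H σ := ⟨h⁻¹, rfl⟩
  have hρ₀ne : ρ₀ ≠ h⁻¹ • σ := by
    intro e
    apply hne
    rw [e, smul_inv_smul]
  have heq := hequiv h (h⁻¹ • σ) hσ' ρ₀ hρ₀ne
  rw [smul_inv_smul] at heq
  rw [← heq] at hp
  obtain ⟨p₀, hp₀, rfl⟩ := Finset.mem_image.mp hp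
  obtain ⟨v₀, hv₀p, hv₀R⟩ := hconv (h⁻¹ • σ) hσ' ρ₀ hρ₀R hρ₀ne p₀ hp₀
  exact ⟨h • v₀, Sym2.mem_map.mpr ⟨v₀, hv₀p, rfl⟩, h, v₀, hv₀R, rfl⟩
end

section
/- Let δ ≥ 1, let Γ be a connected, locally finite, δ-hyperbolic graph, let D ≥ 8δ + 1, and let C be a nonempty finite set of vertices of Γ of diameter at most 4δ + 1. Then for every r ∈ ℕ the subgraph of the Rips graph Γ_D induced on the ball B_r(C) is dismantlable. -/
open SimpleGraph

variable {V : Type*}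

section Aux

open SimpleGraph Walk

private lemma aux_dist_getVert_le {V : Type*} {G : SimpleGraph V} (hconn : G.Connected)
    {u v : V} (p : G.Walk u v) : ∀ k : ℕ, G.dist u (p.getVert k) ≤ k := by
  induction p with
  | nil => intro k; simp [Walk.getVert, SimpleGraph.dist_self]
  | @cons a b c h q ih =>
    intro k
    cases k with
    | zero => simp
    | succ k =>
      rw [Walk.getVert_cons_succ]
      calc G.dist a (q.getVert k) ≤ G.dist a b + G.dist b (q.getVert k) :=
            hconn.dist_triangle
        _ ≤ 1 + k := by
            have h1 : G.dist a b ≤ 1 := by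
              simpa using G.dist_le h.toWalk
            exact Nat.add_le_add h1 (ih k)
        _ = k + 1 := Nat.add_comm _ _

private lemma aux_dist_getVert_right_le {V : Type*} {G : SimpleGraph V}
    {u v : V} (p : G.Walk u v) : ∀ k : ℕ, G.dist (p.getVert k) v ≤ p.length - k := by
  induction p with
  | nil => intro k; simp [Walk.getVert]
  | @cons a b c h q ih =>
    intro k
    cases k with
    | zero =>
      simpa using G.dist_le (Walk.cons h q)
    | succ k =>
      rw [Walk.getVert_cons_succ]
      simpa [Walk.length_cons, Nat.succ_sub_succ] using ih k

private lemma aux_split {V : Type*} {G : SimpleGraph V} (hconn : G.Connected)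
    {u v s : V} (p : G.Walk u v) (hp : p.length = G.dist u v) (hs : s ∈ p.support) :
    G.dist u s + G.dist s v = G.dist u v := by
  classical
  have h1 : G.dist u s ≤ (p.takeUntil s hs).length := G.dist_le _
  have h2 : G.dist s v ≤ (p.dropUntil s hs).length := G.dist_le _
  have h3 := congrArg Walk.length (p.take_spec hs)
  rw [Walk.length_append] at h3
  have h4 : G.dist u v ≤ G.dist u s + G.dist s v := hconn.dist_triangle
  omega

private lemma aux_ball_finite {V : Type*} {G : SimpleGraph V} (hconn : G.Connected)
    (hlf : ∀ v : V, (G.neighborSet v).Finite) (c : V) :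
    ∀ r : ℕ, {v : V | G.dist v c ≤ r}.Finite := by
  intro r
  induction r with
  | zero =>
    apply Set.Finite.subset (Set.finite_singleton c)
    intro v hv
    simp only [Set.mem_setOf_eq, Nat.le_zero] at hv
    simpa using (hconn.dist_eq_zero_iff).mp hv
  | succ r ih =>
    apply Set.Finite.subset (ih.union (Set.Finite.biUnion ih (fun u _ => hlf u)))
    intro v hv
    simp only [Set.mem_setOf_eq] at hv
    by_cases hle : G.dist v c ≤ r
    · exact Or.inl hle
    · right
      have hd : G.dist v c = r + 1 := by omega
      obtain ⟨p, hp⟩ := (hconn v c).exists_walk_length_eq_dist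
      cases p with
      | nil => rw [hd] at hp; simp at hp
      | @cons a b c' h q =>
        refine Set.mem_biUnion (x := b) ?_ ?_
        · have : G.dist b c ≤ q.length := G.dist_le q
          simp only [Walk.length_cons, hd] at hp
          simp only [Set.mem_setOf_eq]
          omega
        · exact h.symm

private lemma aux_proj {V : Type*} {G : SimpleGraph V} (hconn : G.Connected)
    {δ D : ℕ} (hhyp : Hyperbolic G δ) (hD : 8 * δ + 1 ≤ D)
    {v c w v' : V} (p : G.Walk v c) (hp : IsGeodesic G p) (hv' : v' ∈ p.support)
    (h1 : G.dist v v' = 2 * δ) (h2 : G.dist v' c + 2 * δ = G.dist v c)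
    (h3 : G.dist w c ≤ G.dist v c + (4 * δ + 1)) (h4 : G.dist w v ≤ D) :
    G.dist w v' ≤ D := by
  obtain ⟨q, hq⟩ := (hconn c w).exists_walk_length_eq_dist
  obtain ⟨rr, hr⟩ := (hconn w v).exists_walk_length_eq_dist
  obtain ⟨s, hs, hss⟩ := hhyp v c w p q rr hp hq hr v' hv'
  have e1 : G.dist w c = G.dist c w := G.dist_comm
  have t2 : G.dist w v' ≤ G.dist w s + G.dist s v' := hconn.dist_triangle
  have e2 : G.dist s v' = G.dist v' s := G.dist_comm
  cases hs with
  | inl hsq =>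
    have hsp := aux_split hconn q hq hsq
    have t1 : G.dist v' c ≤ G.dist v' s + G.dist s c := hconn.dist_triangle
    have e3 : G.dist s c = G.dist c s := G.dist_comm
    have e4 : G.dist w s = G.dist s w := G.dist_comm
    omega
  | inr hsr =>
    have hsp := aux_split hconn rr hr hsr
    have t1 : G.dist v v' ≤ G.dist v s + G.dist s v' := hconn.dist_triangle
    have e3 : G.dist s v = G.dist v s := G.dist_comm
    omega

end Aux

/-- Let `Γ` be connected, locally finite and `δ`-hyperbolic with
`δ ≥ 1`, let `D ≥ 8δ + 1`, and let `C` be a nonempty finite set of vertices of diameter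
at most `4δ + 1`. Then for every `r` the subgraph of the Rips graph `Γ_D` induced on the
ball `B_r(C)` is dismantlable. -/
theorem rips_ball_dismantlable {V : Type*} (G : SimpleGraph V) (hconn : G.Connected)
    (hlf : ∀ v : V, (G.neighborSet v).Finite)
    (δ : ℕ) (hδ : 1 ≤ δ) (hhyp : Hyperbolic G δ)
    (D : ℕ) (hD : 8 * δ + 1 ≤ D)
    (C : Set V) (hCne : C.Nonempty) (hCfin : C.Finite)
    (hCdiam : ∀ x ∈ C, ∀ y ∈ C, G.dist x y ≤ 4 * δ + 1)
    (r : ℕ) :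
    DismantlableOn (ripsGraph G D) (ballSet G C r) := by
  classical
  set F : Finset V := hCfin.toFinset with hF
  have hFC : ∀ c, c ∈ F ↔ c ∈ C := fun c => hCfin.mem_toFinset
  have hFne : F.Nonempty := by
    obtain ⟨c, hc⟩ := hCne
    exact ⟨c, (hFC c).mpr hc⟩
  set dC : V → ℕ := fun v => F.inf' hFne (fun c => G.dist v c) with hdCdef
  have hdC_le : ∀ v, ∀ c ∈ C, dC v ≤ G.dist v c := by
    intro v c hc
    exact Finset.inf'_le _ ((hFC c).mpr hc)
  have hdC_ex : ∀ v, ∃ c ∈ C, G.dist v c = dC v := by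
    intro v
    obtain ⟨c, hc, hmin⟩ := Finset.exists_mem_eq_inf' hFne (fun c => G.dist v c)
    exact ⟨c, (hFC c).mp hc, hmin.symm⟩
  have hball : ∀ v, v ∈ ballSet G C r ↔ dC v ≤ r := by
    intro v
    constructor
    · rintro ⟨c, hc, hd⟩
      exact le_trans (hdC_le v c hc) hd
    · intro h
      obtain ⟨c, hc, hd⟩ := hdC_ex v
      exact ⟨c, hc, by omega⟩
  have hBfin : (ballSet G C r).Finite := by
    apply Set.Finite.subset (Set.Finite.biUnion hCfin
      (fun c _ => aux_ball_finite hconn hlf c r))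
    rintro v ⟨c, hc, hd⟩
    exact Set.mem_biUnion hc hd
  set rel : V → V → Prop := fun a b => dC b ≤ dC a with hrel
  haveI : DecidableRel rel := fun a b => inferInstanceAs (Decidable (dC b ≤ dC a))
  haveI htot : IsTotal V rel := ⟨fun a b => (le_total (dC b) (dC a)).imp id id⟩
  haveI htrans : IsTrans V rel := ⟨fun _ _ _ h1 h2 => le_trans h2 h1⟩
  haveI hrefl : IsRefl V rel := ⟨fun a => le_refl (dC a)⟩
  set l : List V := List.insertionSort rel hBfin.toFinset.toList with hldef
  have hperm : l.Perm hBfin.toFinset.toList := List.perm_insertionSort rel _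
  have hsorted : l.Pairwise rel := List.pairwise_insertionSort rel _
  have hnodup : l.Nodup := hperm.nodup_iff.mpr (Finset.nodup_toList _)
  have hmem : ∀ v, v ∈ l ↔ v ∈ ballSet G C r := by
    intro v
    rw [hperm.mem_iff, Finset.mem_toList, Set.Finite.mem_toFinset]
  have hsort_le : ∀ (i j : ℕ) (hi : i < l.length) (hj : j < l.length), i ≤ j →
      dC (l[j]'hj) ≤ dC (l[i]'hi) := by
    intro i j hi hj hij
    have h := hsorted.rel_get_of_le (a := ⟨i, hi⟩) (b := ⟨j, hj⟩) (Fin.mk_le_mk.mpr hij)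
    simpa [List.get_eq_getElem, hrel] using h
  have hdropmem : ∀ (i j : ℕ) (hj : j < l.length), i ≤ j → l[j]'hj ∈ l.drop i := by
    intro i j hj hij
    obtain ⟨k, rfl⟩ : ∃ k, j = i + k := ⟨j - i, by omega⟩
    rw [List.mem_iff_getElem]
    refine ⟨k, by rw [List.length_drop]; omega, ?_⟩
    rw [List.getElem_drop]
  have hdrople : ∀ (i : ℕ) (hi : i < l.length), ∀ w ∈ l.drop i, dC w ≤ dC (l[i]'hi) := by
    intro i hi w hw
    rw [List.mem_iff_getElem] at hw
    obtain ⟨k, hk, rfl⟩ := hw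
    rw [List.length_drop] at hk
    rw [List.getElem_drop]
    exact hsort_le i (i + k) hi (by omega) (by omega)
  refine ⟨l, hnodup, hmem, ?_⟩
  intro i hi hilast
  set ρ := l[i]'hi with hρdef
  have hρball : ρ ∈ ballSet G C r := (hmem ρ).mp (List.getElem_mem hi)
  have hρr : dC ρ ≤ r := (hball ρ).mp hρball
  by_cases hbig : 2 * δ + 1 ≤ dC ρ
  · -- projection case
    obtain ⟨c, hc, hdc⟩ := hdC_ex ρ
    obtain ⟨p, hp⟩ := hconn.exists_walk_length_eq_dist ρ c
    have hk : 2 * δ ≤ p.length := by rw [hp, hdc]; omega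
    have hv's : p.getVert (2 * δ) ∈ p.support :=
      Walk.mem_support_iff_exists_getVert.mpr ⟨2 * δ, rfl, hk⟩
    set v' := p.getVert (2 * δ) with hv'def
    have hd1 : G.dist ρ v' ≤ 2 * δ := aux_dist_getVert_le hconn p (2 * δ)
    have hd2 : G.dist v' c ≤ p.length - 2 * δ := aux_dist_getVert_right_le p (2 * δ)
    have hsplit := aux_split hconn p hp hv's
    have he1 : G.dist ρ v' = 2 * δ := by omega
    have he2 : G.dist v' c + 2 * δ = G.dist ρ c := by omega
    have hlt : dC v' < dC ρ := by
      have := hdC_le v' c hc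
      omega
    have hv'ball : v' ∈ ballSet G C r := (hball v').mpr (by omega)
    have hv'l : v' ∈ l := (hmem v').mpr hv'ball
    obtain ⟨j, hj, hjv⟩ := List.mem_iff_getElem.mp hv'l
    have hij : i < j := by
      by_contra hcon
      push_neg at hcon
      have h := hsort_le j i hj hi hcon
      rw [hjv] at h
      rw [← hρdef] at h
      omega
    have hv'drop : v' ∈ l.drop i := hjv ▸ hdropmem i j hj (le_of_lt hij)
    have hne : v' ≠ ρ := by
      intro h
      rw [h, SimpleGraph.dist_self] at he1
      omega
    refine ⟨v', hv'drop, hne, ?_⟩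
    intro w hw hwρ
    have hwle : dC w ≤ dC ρ := hdrople i hi w hw
    simp only [closedNbhd, Set.mem_insert_iff, Set.mem_setOf_eq] at hwρ ⊢
    rcases hwρ with h | hadj
    · subst h
      right
      refine (show v' ≠ ρ ∧ G.dist v' ρ ≤ D from ⟨hne, ?_⟩)
      rw [SimpleGraph.dist_comm]
      omega
    · have hneq : ρ ≠ w := hadj.1
      have hdist : G.dist ρ w ≤ D := hadj.2
      by_cases hwv' : w = v'
      · left; exact hwv'
      · right
        have h3 : G.dist w c ≤ G.dist ρ c + (4 * δ + 1) := by
          obtain ⟨cw, hcw, hcwd⟩ := hdC_ex w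
          have t : G.dist w c ≤ G.dist w cw + G.dist cw c := hconn.dist_triangle
          have hcc := hCdiam cw hcw c hc
          omega
        have h4 : G.dist w ρ ≤ D := by rw [SimpleGraph.dist_comm]; exact hdist
        have hkey := aux_proj hconn hhyp hD p hp hv's he1 he2 h3 h4
        refine (show v' ≠ w ∧ G.dist v' w ≤ D from ⟨fun h => hwv' h.symm, ?_⟩)
        rw [SimpleGraph.dist_comm]
        exact hkey
  · -- clique case
    push_neg at hbig
    have hi1 : i + 1 < l.length := by omega
    have hπdrop : l[i+1]'hi1 ∈ l.drop i := hdropmem i (i+1) hi1 (by omega)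
    have hπne : l[i+1]'hi1 ≠ ρ := by
      rw [hρdef]
      intro h
      have := (List.Nodup.getElem_inj_iff hnodup).mp h
      omega
    refine ⟨l[i+1]'hi1, hπdrop, hπne, ?_⟩
    intro w hw _
    have hwle : dC w ≤ dC ρ := hdrople i hi w hw
    have hπle : dC (l[i+1]'hi1) ≤ dC ρ := hdrople i hi _ hπdrop
    simp only [closedNbhd, Set.mem_insert_iff, Set.mem_setOf_eq]
    by_cases hwπ : w = l[i+1]'hi1
    · left; exact hwπ
    · right
      obtain ⟨cw, hcw, hcwd⟩ := hdC_ex w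
      obtain ⟨cπ, hcπ, hcπd⟩ := hdC_ex (l[i+1]'hi1)
      have t1 : G.dist (l[i+1]'hi1) w ≤ G.dist (l[i+1]'hi1) cπ + G.dist cπ w :=
        hconn.dist_triangle
      have t2 : G.dist cπ w ≤ G.dist cπ cw + G.dist cw w := hconn.dist_triangle
      have hcc := hCdiam cπ hcπ cw hcw
      have e2 : G.dist cw w = G.dist w cw := SimpleGraph.dist_comm
      refine (show l[i+1]'hi1 ≠ w ∧ G.dist (l[i+1]'hi1) w ≤ D from
        ⟨fun h => hwπ h.symm, by omega⟩)
end
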